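/- arXiv:2505.00587 — 2 statements merged into one kernel-verified Lean document; each statement's English description precedes it below -/
import Mathlib

section
/- Let $(X, \mathcal{F}, \mu)$ be a complete measure space, $\mathcal{H}$ a Hilbert space, and let $\mathrm{id} \overline{\otimes} q : \mathbb{B}(\mathcal{H}) \overline{\otimes} M^\infty(\mathcal{F}) \to \mathbb{B}(\mathcal{H}) \overline{\otimes} L^\infty(X, \mu)$ be the unique unital completely positive map extending $\mathrm{id} \odot q$. If $\rho$ is a lifting for $(X, \mathcal{F}, \mu)$, then the unique unital completely positive map $\mathrm{id} \overline{\otimes} \rho : \mathbb{B}(\mathcal{H}) \overline{\otimes} L^\infty(X, \mu) \to \mathbb{B}(\mathcal{H}) \overline{\otimes} M^\infty(\mathcal{F})$ extending $\mathrm{id} \odot \rho$ is a unital complete order embedding and satisfies $(\mathrm{id} \overline{\otimes} q) \circ (\mathrm{id} \overline{\otimes} \rho) = \mathrm{id}$. -/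
set_option linter.unusedVariables false

universe u

noncomputable section

open MeasureTheory Filter Topology Set

namespace Paper

/-- The bounded operators on a complex Hilbert space. -/
abbrev BH (H : Type*) [NormedAddCommGroup H] [InnerProductSpace ℂ H] [CompleteSpace H] :=
  H →L[ℂ] H

instance piLpCompleteSpace (H : Type*) [NormedAddCommGroup H] [InnerProductSpace ℂ H]
    [CompleteSpace H] (n : ℕ) : CompleteSpace (PiLp 2 fun _ : Fin n => H) :=
  inferInstance

section Basic

variable {H K L : Type*}
  [NormedAddCommGroup H] [InnerProductSpace ℂ H] [CompleteSpace H]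
  [NormedAddCommGroup K] [InnerProductSpace ℂ K] [CompleteSpace K]
  [NormedAddCommGroup L] [InnerProductSpace ℂ L] [CompleteSpace L]

/-- An `n × n` matrix of bounded operators on `H`, viewed as a bounded operator on the
Hilbert space direct sum of `n` copies of `H`. -/
def matOp {n : ℕ} (M : Matrix (Fin n) (Fin n) (BH H)) : BH (PiLp 2 fun _ : Fin n => H) :=
  (((PiLp.continuousLinearEquiv 2 ℂ (fun _ : Fin n => H)).symm :
      ((i : Fin n) → H) →L[ℂ] PiLp 2 fun _ : Fin n => H)).comp <|
    (ContinuousLinearMap.pi fun i => ∑ j, (M i j).comp (ContinuousLinearMap.proj j)).comp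
      (((PiLp.continuousLinearEquiv 2 ℂ (fun _ : Fin n => H)) :
        (PiLp 2 fun _ : Fin n => H) →L[ℂ] ((i : Fin n) → H)))

/-- All entries of a matrix of operators belong to the set `A`. -/
def entriesIn {n : ℕ} (M : Matrix (Fin n) (Fin n) (BH H)) (A : Set (BH H)) : Prop :=
  ∀ i j, M i j ∈ A

/-- `φ` is linear on the subset `A`. -/
def IsLinearOn (φ : BH H → BH K) (A : Set (BH H)) : Prop :=
  (∀ x ∈ A, ∀ y ∈ A, φ (x + y) = φ x + φ y) ∧ (∀ (c : ℂ), ∀ x ∈ A, φ (c • x) = c • φ x)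

/-- `φ` is an algebra homomorphism on the subset `A`. -/
def IsHomOn (φ : BH H → BH K) (A : Set (BH H)) : Prop :=
  IsLinearOn φ A ∧ ∀ x ∈ A, ∀ y ∈ A, φ (x * y) = φ x * φ y

/-- `φ` is a ∗-homomorphism on the subset `A`. -/
def IsStarHomOn (φ : BH H → BH K) (A : Set (BH H)) : Prop :=
  IsHomOn φ A ∧ ∀ x ∈ A, φ (star x) = star (φ x)

/-- `φ` is completely positive on the subset `A`. -/
def IsCompletelyPositiveOn (φ : BH H → BH K) (A : Set (BH H)) : Prop :=
  ∀ (n : ℕ) (M : Matrix (Fin n) (Fin n) (BH H)), entriesIn M A →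
    (matOp M).IsPositive → (matOp (M.map φ)).IsPositive

/-- `φ` is completely contractive on the subset `A`. -/
def IsCompletelyContractiveOn (φ : BH H → BH K) (A : Set (BH H)) : Prop :=
  ∀ (n : ℕ) (M : Matrix (Fin n) (Fin n) (BH H)), entriesIn M A →
    ‖matOp (M.map φ)‖ ≤ ‖matOp M‖

/-- `φ` is completely isometric on the subset `A`. -/
def IsCompletelyIsometricOn (φ : BH H → BH K) (A : Set (BH H)) : Prop :=
  ∀ (n : ℕ) (M : Matrix (Fin n) (Fin n) (BH H)), entriesIn M A →
    ‖matOp (M.map φ)‖ = ‖matOp M‖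

/-- `φ` is a complete order embedding on the subset `A`: all matrix amplifications of `φ`
reflect and preserve positivity. -/
def IsCompleteOrderEmbeddingOn (φ : BH H → BH K) (A : Set (BH H)) : Prop :=
  ∀ (n : ℕ) (M : Matrix (Fin n) (Fin n) (BH H)), entriesIn M A →
    ((matOp (M.map φ)).IsPositive ↔ (matOp M).IsPositive)

/-- A unital completely positive map on the subset `A` (operator system). -/
def IsUCPOn (φ : BH H → BH K) (A : Set (BH H)) : Prop :=
  IsLinearOn φ A ∧ IsCompletelyPositiveOn φ A ∧ φ 1 = 1

/-- `A` is a (not necessarily unital, not necessarily closed) subalgebra of `B(H)`. -/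
def IsSubalgebra (A : Set (BH H)) : Prop :=
  (∀ x ∈ A, ∀ y ∈ A, x + y ∈ A) ∧ (∀ (c : ℂ), ∀ x ∈ A, c • x ∈ A) ∧
    (∀ x ∈ A, ∀ y ∈ A, x * y ∈ A)

/-- An operator algebra: a norm-closed subalgebra of the bounded operators. -/
def IsOperatorAlgebra (A : Set (BH H)) : Prop :=
  IsSubalgebra A ∧ IsClosed A

/-- A concrete C*-algebra: a norm-closed self-adjoint subalgebra of the bounded operators. -/
def IsCStarSubalgebra (B : Set (BH H)) : Prop :=
  IsOperatorAlgebra B ∧ ∀ x ∈ B, star x ∈ B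

/-- The C*-subalgebra of `B(K)` generated by a subset `S`. -/
def genCStar (S : Set (BH K)) : Set (BH K) :=
  ⋂₀ {B : Set (BH K) | IsCStarSubalgebra B ∧ S ⊆ B}

/-- The norm-closed (non-selfadjoint) operator algebra generated by a subset `S`. -/
def genOpAlg (S : Set (BH K)) : Set (BH K) :=
  ⋂₀ {B : Set (BH K) | IsOperatorAlgebra B ∧ S ⊆ B}

/-- `π` is nondegenerate on `A`: the images `π(a)ξ` have dense linear span. -/
def IsNondegenerateOn (π : BH H → BH K) (A : Set (BH H)) : Prop :=
  (Submodule.span ℂ {ξ : K | ∃ a ∈ A, ∃ η : K, π a η = ξ}).topologicalClosure = ⊤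

/-- `A` admits a contractive approximate identity (formulated via a filter/net). -/
def HasContractiveAI (A : Set (BH H)) : Prop :=
  ∃ l : Filter (BH H), l.NeBot ∧ (∀ᶠ x in l, x ∈ A ∧ ‖x‖ ≤ 1) ∧
    ∀ a ∈ A, Tendsto (fun x => x * a) l (nhds a) ∧ Tendsto (fun x => a * x) l (nhds a)

/-- `A` admits a self-adjoint contractive approximate identity. -/
def HasSAContractiveAI (A : Set (BH H)) : Prop :=
  ∃ l : Filter (BH H), l.NeBot ∧ (∀ᶠ x in l, x ∈ A ∧ IsSelfAdjoint x ∧ ‖x‖ ≤ 1) ∧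
    ∀ a ∈ A, Tendsto (fun x => x * a) l (nhds a) ∧ Tendsto (fun x => a * x) l (nhds a)

/-- `π` has the unique extension property with respect to the generating subalgebra `A` of
the C*-algebra `B`:  `π` is the unique completely contractive completely positive map on `B`
agreeing with `π` on `A`. -/
def HasUEP (π : BH H → BH K) (B A : Set (BH H)) : Prop :=
  ∀ ψ : BH H → BH K, IsLinearOn ψ B → IsCompletelyPositiveOn ψ B →
    IsCompletelyContractiveOn ψ B → (∀ a ∈ A, ψ a = π a) → ∀ b ∈ B, ψ b = π b

/-- `(genCStar (ε '' A), ε)` is a C*-envelope of the operator algebra `A`:  `ε` is a completely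
isometric representation and the generated C*-algebra has the co-universal property. -/
def IsCStarEnvelope.{v} (A : Set (BH H)) (ε : BH H → BH K) : Prop :=
  IsHomOn ε A ∧ IsCompletelyIsometricOn ε A ∧
  ∀ (K' : Type v) [instK'1 : NormedAddCommGroup K'] [instK'2 : InnerProductSpace ℂ K']
      [instK'3 : CompleteSpace K'] (ι : BH H → BH K'),
    IsHomOn ι A → IsCompletelyIsometricOn ι A →
    ∃ Φ : BH K' → BH K,
      IsStarHomOn Φ (genCStar (ι '' A)) ∧
      Φ '' (genCStar (ι '' A)) = genCStar (ε '' A) ∧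
      ∀ a ∈ A, Φ (ι a) = ε a

/-- The Loewner order: `T ≼ S`. -/
def opLE (T S : BH K) : Prop := (S - T).IsPositive

/-- `T` is the least upper bound in `B` of the subset `s`. -/
def IsLUBIn (B s : Set (BH K)) (T : BH K) : Prop :=
  T ∈ B ∧ (∀ x ∈ s, opLE x T) ∧ ∀ y ∈ B, (∀ x ∈ s, opLE x y) → opLE T y

/-- A subset of `B(K)` is monotone complete: every nonempty upward directed bounded family of
self-adjoint elements of `B` admits a least upper bound in `B`. -/
def IsMonotoneComplete (B : Set (BH K)) : Prop :=
  ∀ s ⊆ B, s.Nonempty → (∀ x ∈ s, IsSelfAdjoint x) → DirectedOn opLE s →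
    (∃ b : BH K, ∀ x ∈ s, opLE x b) → ∃ T, IsLUBIn B s T

end Basic

section Dynamics

variable (G : Type*) [Group G] [TopologicalSpace G]
variable {H K : Type*}
  [NormedAddCommGroup H] [InnerProductSpace ℂ H] [CompleteSpace H]
  [NormedAddCommGroup K] [InnerProductSpace ℂ K] [CompleteSpace K]

/-- A dynamical system: a point-norm continuous action of `G` on the operator algebra `A`
by completely isometric automorphisms. -/
def IsDynamicalSystem (A : Set (BH H)) (act : G → BH H → BH H) : Prop :=
  IsOperatorAlgebra A ∧
  (∀ g, Set.MapsTo (act g) A A) ∧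
  (∀ g, IsHomOn (act g) A) ∧
  (∀ a ∈ A, act 1 a = a) ∧
  (∀ g h, ∀ a ∈ A, act (g * h) a = act g (act h a)) ∧
  (∀ g, IsCompletelyIsometricOn (act g) A) ∧
  (∀ a ∈ A, Continuous fun g => act g a)

/-- A C*-dynamical system: a point-norm continuous action of `G` on the concrete
C*-algebra `B` by ∗-automorphisms. -/
def IsCStarDynamicalSystem (B : Set (BH H)) (act : G → BH H → BH H) : Prop :=
  IsCStarSubalgebra B ∧
  (∀ g, Set.MapsTo (act g) B B) ∧
  (∀ g, IsStarHomOn (act g) B) ∧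
  (∀ b ∈ B, act 1 b = b) ∧
  (∀ g h, ∀ b ∈ B, act (g * h) b = act g (act h b)) ∧
  (∀ b ∈ B, Continuous fun g => act g b)

end Dynamics

section Haar

variable (G : Type*) [Group G] [TopologicalSpace G] [IsTopologicalGroup G]
  [LocallyCompactSpace G] [T2Space G] [MeasurableSpace G] [BorelSpace G]

/-- Left Haar measure on `G`. -/
abbrev haarG : Measure G := Measure.haar

variable (K : Type*) [NormedAddCommGroup K] [InnerProductSpace ℂ K] [CompleteSpace K]

/-- The Hilbert space `L²(G, K) ≅ K ⊗ L²(G)` with respect to left Haar measure. -/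
abbrev L2 := Lp K 2 (haarG G)

variable {G K}

/-- `U` is (the ampliation of) the left regular representation `1 ⊗ λ` on `L²(G, K)`. -/
def IsTranslationRep (U : G → BH (L2 G K)) : Prop :=
  ∀ (g : G) (ξ : L2 G K), ⇑(U g ξ) =ᵐ[haarG G] fun h => ξ (g⁻¹ * h)

variable {H : Type*} [NormedAddCommGroup H] [InnerProductSpace ℂ H] [CompleteSpace H]

/-- `PA` is the multiplication representation `π_α` on `L²(G, K)` associated to a
representation `π` and an action `act`: `(π_α(a) ξ)(g) = π (α_g⁻¹ a) (ξ g)` for `a ∈ B`. -/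
def IsPiAlpha (act : G → BH H → BH H) (π : BH H → BH K) (B : Set (BH H))
    (PA : BH H → BH (L2 G K)) : Prop :=
  ∀ a ∈ B, ∀ ξ : L2 G K, ⇑(PA a ξ) =ᵐ[haarG G] fun g => π (act g⁻¹ a) (ξ g)

/-- The integrated form `σ(f) = ∫ π_α(f(g)) U(g) dg` of a covariant pair. -/
def integratedForm (PA : BH H → BH (L2 G K)) (U : G → BH (L2 G K)) (f : G → BH H) :
    BH (L2 G K) :=
  ∫ g, (PA (f g)) * (U g) ∂(haarG G)

/-- The reduced crossed product of (the closed subspace, subalgebra, …) `S` by `G`: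
the norm closure of the integrated forms of compactly supported continuous `S`-valued
functions. -/
def reducedCrossedProduct (S : Set (BH H)) (PA : BH H → BH (L2 G K))
    (U : G → BH (L2 G K)) : Set (BH (L2 G K)) :=
  closure {T | ∃ f : G → BH H, Continuous f ∧ HasCompactSupport f ∧ (∀ g, f g ∈ S) ∧
    T = integratedForm PA U f}

end Haar

section Fubini

variable {X : Type*} [MeasurableSpace X]
variable {H E : Type*} [NormedAddCommGroup H] [InnerProductSpace ℂ H] [CompleteSpace H]
  [NormedAddCommGroup E] [InnerProductSpace ℂ E] [CompleteSpace E]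

/-- The bounded measurable complex functions on `X` (the C*-algebra `M^∞(F)`). -/
def MInfty (X : Type*) [MeasurableSpace X] : Set (X → ℂ) :=
  {f | Measurable f ∧ ∃ C : ℝ, ∀ x, ‖f x‖ ≤ C}

/-- The ℓ²-direct sum of copies of `E` over `X`, i.e. `E ⊗ ℓ²(X)`. -/
abbrev ld2 (X : Type*) (E : Type*) [NormedAddCommGroup E] [InnerProductSpace ℂ E] :
    Type _ := lp (fun _ : X => E) 2

/-- `m` implements multiplication by bounded measurable functions on `L²(X, μ; E)`. -/
def IsMulRepL (μ : Measure X) (m : (X → ℂ) → BH (Lp E 2 μ)) : Prop :=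
  ∀ f ∈ MInfty X, ∀ ξ : Lp E 2 μ, ⇑(m f ξ) =ᵐ[μ] fun x => f x • ξ x

/-- `m` implements multiplication by bounded functions on `ℓ²(X; E)`. -/
def IsMulRepD (m : (X → ℂ) → BH (ld2 X E)) : Prop :=
  ∀ f ∈ MInfty X, ∀ (ξ : ld2 X E) (x : X), (m f ξ) x = f x • ξ x

/-- `oT` implements the elementary tensors `T ⊗ f` on `L²(X, μ; H) ≅ H ⊗ L²(X, μ)`. -/
def IsElemTensorRepL (μ : Measure X) (oT : BH H → (X → ℂ) → BH (Lp H 2 μ)) : Prop :=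
  ∀ (T : BH H), ∀ f ∈ MInfty X, ∀ ξ : Lp H 2 μ, ⇑(oT T f ξ) =ᵐ[μ] fun x => f x • T (ξ x)

/-- `oT` implements the elementary tensors `T ⊗ f` on `ℓ²(X; H) ≅ H ⊗ ℓ²(X)`. -/
def IsElemTensorRepD (oT : BH H → (X → ℂ) → BH (ld2 X H)) : Prop :=
  ∀ (T : BH H), ∀ f ∈ MInfty X, ∀ (ξ : ld2 X H) (x : X), (oT T f ξ) x = f x • T (ξ x)

/-- `J` is the family of isometries `J_i k = e_i ⊗ k`, i.e. `(J_i k)(x) = k(x) • e_i`, from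
`L²(X, μ)` into `L²(X, μ; H)`, associated with an orthonormal basis `e` of `H`. -/
def IsTensorIsometriesL (μ : Measure X) {ι : Type*} (e : ι → H)
    (J : ι → (Lp ℂ 2 μ →L[ℂ] Lp H 2 μ)) : Prop :=
  Orthonormal ℂ e ∧ (Submodule.span ℂ (Set.range e)).topologicalClosure = ⊤ ∧
    ∀ (i : ι) (k : Lp ℂ 2 μ), ⇑(J i k) =ᵐ[μ] fun x => k x • e i

/-- `J` is the family of isometries `J_i k = e_i ⊗ k` from `ℓ²(X)` into `ℓ²(X; H)`,
associated with an orthonormal basis `e` of `H`. -/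
def IsTensorIsometriesD {ι : Type*} (e : ι → H)
    (J : ι → (ld2 X ℂ →L[ℂ] ld2 X H)) : Prop :=
  Orthonormal ℂ e ∧ (Submodule.span ℂ (Set.range e)).topologicalClosure = ⊤ ∧
    ∀ (i : ι) (k : ld2 X ℂ) (x : X), (J i k) x = k x • e i

/-- Hamana's Fubini tensor product `B(H) ⊗̄ S`, relative to the family of isometries
`J_i = 1 ⊗ e_i`: the set of operators all of whose slices `J_i* x J_j` lie in `S`. -/
def fubini {KK HK : Type*} [NormedAddCommGroup KK] [InnerProductSpace ℂ KK] [CompleteSpace KK]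
    [NormedAddCommGroup HK] [InnerProductSpace ℂ HK] [CompleteSpace HK]
    {ι : Type*} (J : ι → (KK →L[ℂ] HK)) (S : Set (BH KK)) : Set (BH HK) :=
  {T | ∀ i j, (ContinuousLinearMap.adjoint (J i)).comp (T.comp (J j)) ∈ S}

/-- A lifting for the (complete) measure `μ`: a ∗-homomorphic selection
`L^∞(X, μ) → M^∞(F)`, described at the level of bounded measurable functions: it is
well defined on a.e.-classes and picks a genuine bounded measurable representative. -/
def IsLifting (μ : Measure X) (ρ : (X → ℂ) → (X → ℂ)) : Prop :=
  (∀ f ∈ MInfty X, ρ f ∈ MInfty X ∧ ρ f =ᵐ[μ] f) ∧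
  (∀ f ∈ MInfty X, ∀ g ∈ MInfty X, f =ᵐ[μ] g → ρ f = ρ g) ∧
  (ρ (fun _ => (1 : ℂ)) = fun _ => 1) ∧
  (∀ f ∈ MInfty X, ∀ g ∈ MInfty X, ρ (f + g) = ρ f + ρ g) ∧
  (∀ f ∈ MInfty X, ∀ g ∈ MInfty X, ρ (f * g) = ρ f * ρ g) ∧
  (∀ (c : ℂ), ∀ f ∈ MInfty X, ρ (c • f) = c • ρ f) ∧
  (∀ f ∈ MInfty X, ρ (star f) = star (ρ f))

end Fubini

section Correspondence

variable {H₀ KK : Type*}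
  [NormedAddCommGroup H₀] [InnerProductSpace ℂ H₀] [CompleteSpace H₀]
  [NormedAddCommGroup KK] [InnerProductSpace ℂ KK] [CompleteSpace KK]

/-- A (nondegenerate) C*-correspondence over `B`, concretely and riggedly represented:
`X` is a norm-closed subspace with `B·X ⊆ X`, `X·B ⊆ X`, `X*·X ⊆ B`, and the left action
of `B` on `X` is nondegenerate. The `B`-valued inner product is `⟨x, y⟩ = x* y`. -/
def IsConcreteCorrespondence (B X : Set (BH H₀)) : Prop :=
  IsCStarSubalgebra B ∧
  (IsClosed X ∧ (∀ x ∈ X, ∀ y ∈ X, x + y ∈ X) ∧ (∀ (c : ℂ), ∀ x ∈ X, c • x ∈ X)) ∧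
  (∀ b ∈ B, ∀ x ∈ X, b * x ∈ X) ∧
  (∀ x ∈ X, ∀ b ∈ B, x * b ∈ X) ∧
  (∀ x ∈ X, ∀ y ∈ X, star x * y ∈ B) ∧
  closure ((Submodule.span ℂ {z : BH H₀ | ∃ b ∈ B, ∃ x ∈ X, z = b * x} : Submodule ℂ (BH H₀)) :
    Set (BH H₀)) = X

/-- Katsura's ideal `J_X ⊆ B`: the elements acting as compact (i.e. norm limits of finite
sums of "rank one" operators `θ_{x,y} = x y*`) operators on `X` and orthogonal to the
kernel of the left action. -/
def KatsuraIdeal (B X : Set (BH H₀)) : Set (BH H₀) :=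
  {b | b ∈ B ∧ (∀ c ∈ B, (∀ x ∈ X, c * x = 0) → b * c = 0) ∧
    ∀ ε > (0:ℝ), ∃ (n : ℕ) (xs ys : Fin n → BH H₀), (∀ i, xs i ∈ X ∧ ys i ∈ X) ∧
      ∀ z ∈ X, ‖z‖ ≤ 1 → ‖b * z - ∑ i, xs i * star (ys i) * z‖ ≤ ε}

/-- A rigged (isometric) representation `(ρ, t)` of the C*-correspondence `(B, X)`. -/
def IsRiggedRep (B X : Set (BH H₀)) (ρ t : BH H₀ → BH KK) : Prop :=
  IsStarHomOn ρ B ∧ IsNondegenerateOn ρ B ∧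
  (∀ x ∈ X, ∀ y ∈ X, t (x + y) = t x + t y) ∧
  (∀ (c : ℂ), ∀ x ∈ X, t (c • x) = c • t x) ∧
  (∀ b ∈ B, ∀ x ∈ X, t (b * x) = ρ b * t x) ∧
  (∀ x ∈ X, ∀ b ∈ B, t (x * b) = t x * ρ b) ∧
  (∀ x ∈ X, ∀ y ∈ X, star (t x) * t y = ρ (star x * y))

/-- A covariant rigged representation: on Katsura's ideal, `ψ_t ∘ φ_X = ρ`. -/
def IsCovariantRep (B X : Set (BH H₀)) (ρ t : BH H₀ → BH KK) : Prop :=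
  IsRiggedRep B X ρ t ∧
  ∀ b ∈ KatsuraIdeal B X, ∀ ε > (0:ℝ), ∀ (n : ℕ) (xs ys : Fin n → BH H₀),
    (∀ i, xs i ∈ X ∧ ys i ∈ X) →
    (∀ z ∈ X, ‖z‖ ≤ 1 → ‖b * z - ∑ i, xs i * star (ys i) * z‖ ≤ ε) →
    ‖ρ b - ∑ i, t (xs i) * star (t (ys i))‖ ≤ ε

/-- `(ρ0, t0)` realizes the Toeplitz algebra `T_X`: a rigged representation which is
universal among all rigged representations of `(B, X)`. -/
def IsToeplitzAlgebra.{v} (B X : Set (BH H₀)) (ρ0 t0 : BH H₀ → BH KK) : Prop :=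
  IsRiggedRep B X ρ0 t0 ∧
  ∀ (K' : Type v) [instK'1 : NormedAddCommGroup K'] [instK'2 : InnerProductSpace ℂ K']
      [instK'3 : CompleteSpace K'] (ρ t : BH H₀ → BH K'),
    IsRiggedRep B X ρ t →
    ∃ Φ : BH KK → BH K',
      IsStarHomOn Φ (genCStar (ρ0 '' B ∪ t0 '' X)) ∧
      (∀ b ∈ B, Φ (ρ0 b) = ρ b) ∧ (∀ x ∈ X, Φ (t0 x) = t x)

/-- `(ρ0, t0)` realizes the Cuntz–Pimsner algebra `O_X`: a covariant rigged representation
which is universal among all covariant rigged representations of `(B, X)`. -/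
def IsCuntzPimsner.{v} (B X : Set (BH H₀)) (ρ0 t0 : BH H₀ → BH KK) : Prop :=
  IsCovariantRep B X ρ0 t0 ∧
  ∀ (K' : Type v) [instK'1 : NormedAddCommGroup K'] [instK'2 : InnerProductSpace ℂ K']
      [instK'3 : CompleteSpace K'] (ρ t : BH H₀ → BH K'),
    IsCovariantRep B X ρ t →
    ∃ Φ : BH KK → BH K',
      IsStarHomOn Φ (genCStar (ρ0 '' B ∪ t0 '' X)) ∧
      (∀ b ∈ B, Φ (ρ0 b) = ρ b) ∧ (∀ x ∈ X, Φ (t0 x) = t x)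

end Correspondence



section Statement2Aux

open MeasureTheory ContinuousLinearMap

local notation "⟪" x ", " y "⟫" => @inner ℂ _ _ x y

section MatrixAux

variable {E F : Type*} [NormedAddCommGroup E] [InnerProductSpace ℂ E] [CompleteSpace E]
  [NormedAddCommGroup F] [InnerProductSpace ℂ F] [CompleteSpace F]

lemma matOp_apply {n : ℕ} (M : Matrix (Fin n) (Fin n) (BH E))
    (v : PiLp 2 fun _ : Fin n => E) (i : Fin n) :
    matOp M v i = ∑ j, M i j (v j) := by
  simp [matOp, ContinuousLinearMap.sum_apply]

/-- The vector `(u, w)` in the 2-fold Hilbert space direct sum. -/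
def vec2 (u w : E) : PiLp 2 (fun _ : Fin 2 => E) :=
  (WithLp.equiv 2 _).symm ![u, w]

lemma vec2_zero (u w : E) : vec2 u w 0 = u := rfl

lemma vec2_one (u w : E) : vec2 u w 1 = w := rfl

lemma matOp2_inner (M : Matrix (Fin 2) (Fin 2) (BH E)) (v w : PiLp 2 fun _ : Fin 2 => E) :
    ⟪matOp M v, w⟫ = ⟪M 0 0 (v 0), w 0⟫ + ⟪M 0 1 (v 1), w 0⟫
      + ⟪M 1 0 (v 0), w 1⟫ + ⟪M 1 1 (v 1), w 1⟫ := by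
  rw [PiLp.inner_apply, Fin.sum_univ_two, matOp_apply, matOp_apply,
    Fin.sum_univ_two, Fin.sum_univ_two, inner_add_left, inner_add_left]
  ring

lemma matOp2_inner_right (M : Matrix (Fin 2) (Fin 2) (BH E)) (v w : PiLp 2 fun _ : Fin 2 => E) :
    ⟪v, matOp M w⟫ = ⟪v 0, M 0 0 (w 0)⟫ + ⟪v 0, M 0 1 (w 1)⟫
      + ⟪v 1, M 1 0 (w 0)⟫ + ⟪v 1, M 1 1 (w 1)⟫ := by
  rw [PiLp.inner_apply, Fin.sum_univ_two, matOp_apply, matOp_apply,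
    Fin.sum_univ_two, Fin.sum_univ_two, inner_add_right, inner_add_right]
  ring

lemma core0 {c α : ℂ}
    (h : ∀ s : ℂ, 0 ≤ (c + (starRingEnd ℂ) s * α + s * (starRingEnd ℂ) α).re) :
    α = 0 := by
  by_contra hα
  have hn : 0 < Complex.normSq α := Complex.normSq_pos.mpr hα
  set r : ℝ := (c.re + 1) / (2 * Complex.normSq α) with hr
  have h2 := h (-(r : ℂ) * α)
  have e1 : c + (starRingEnd ℂ) (-(r : ℂ) * α) * α + (-(r : ℂ) * α) * (starRingEnd ℂ) α
      = c - ((2 * r * Complex.normSq α : ℝ) : ℂ) := by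
    rw [map_mul, map_neg, Complex.conj_ofReal]
    push_cast
    rw [← Complex.mul_conj]
    ring
  rw [e1] at h2
  have e2 : (c - ((2 * r * Complex.normSq α : ℝ) : ℂ)).re
      = c.re - 2 * r * Complex.normSq α := by
    simp [Complex.sub_re, Complex.ofReal_re]
  rw [e2] at h2
  have e3 : 2 * r * Complex.normSq α = c.re + 1 := by
    rw [hr]; field_simp
  rw [e3] at h2
  linarith

lemma adjoint_smulC (c : ℂ) (A : E →L[ℂ] F) :
    ContinuousLinearMap.adjoint (c • A) = (starRingEnd ℂ) c • ContinuousLinearMap.adjoint A := by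
  symm
  rw [eq_adjoint_iff]
  intro x y
  simp only [ContinuousLinearMap.smul_apply, inner_smul_left, inner_smul_right,
    adjoint_inner_left, Complex.conj_conj]

lemma adjoint_subC (A B : BH E) :
    ContinuousLinearMap.adjoint (A - B)
      = ContinuousLinearMap.adjoint A - ContinuousLinearMap.adjoint B := by
  rw [← star_eq_adjoint, ← star_eq_adjoint, ← star_eq_adjoint, star_sub]

lemma adjoint_oneC : ContinuousLinearMap.adjoint (1 : BH E) = 1 := by
  rw [← star_eq_adjoint, star_one]

lemma slice_zero {M : Matrix (Fin 2) (Fin 2) (BH E)} (h : (matOp M).IsPositive)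
    (u w : E) (hc : ⟪M 1 1 w, w⟫ = 0 ∨ ⟪M 0 0 u, u⟫ = 0) :
    ⟪M 0 1 w, u⟫ = 0 := by
  have hsym : (matOp M).IsSymmetric := h.1
  have hβ : ⟪M 1 0 u, w⟫ = (starRingEnd ℂ) ⟪M 0 1 w, u⟫ := by
    have h0 := hsym (vec2 0 w) (vec2 u 0)
    simp only [ContinuousLinearMap.coe_coe] at h0
    rw [matOp2_inner, matOp2_inner_right] at h0
    simp only [vec2_zero, vec2_one, map_zero, inner_zero_left, inner_zero_right,
      zero_add, add_zero] at h0
    -- h0 : ⟪M 0 1 w, u⟫ = ⟪w, M 1 0 u⟫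
    rw [h0]
    exact (inner_conj_symm _ _).symm
  rcases hc with hc | hc
  · refine core0 (c := ⟪M 0 0 u, u⟫) fun s => ?_
    have hp := h.re_inner_nonneg_left (vec2 u (s • w))
    rw [RCLike.re_to_complex] at hp
    have hEq : ⟪matOp M (vec2 u (s • w)), vec2 u (s • w)⟫
        = ⟪M 0 0 u, u⟫ + (starRingEnd ℂ) s * ⟪M 0 1 w, u⟫
          + s * (starRingEnd ℂ) ⟪M 0 1 w, u⟫ := by
      rw [matOp2_inner]
      simp only [vec2_zero, vec2_one, _root_.map_smul, inner_smul_left, inner_smul_right,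
        smul_smul]
      rw [hβ, hc]
      ring
    rw [hEq] at hp
    exact hp
  · refine core0 (c := ⟪M 1 1 w, w⟫) fun s => ?_
    have hp := h.re_inner_nonneg_left (vec2 ((starRingEnd ℂ) s • u) w)
    rw [RCLike.re_to_complex] at hp
    have hEq : ⟪matOp M (vec2 ((starRingEnd ℂ) s • u) w), vec2 ((starRingEnd ℂ) s • u) w⟫
        = ⟪M 1 1 w, w⟫ + (starRingEnd ℂ) s * ⟪M 0 1 w, u⟫
          + s * (starRingEnd ℂ) ⟪M 0 1 w, u⟫ := by
      rw [matOp2_inner]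
      simp only [vec2_zero, vec2_one, _root_.map_smul, inner_smul_left, inner_smul_right,
        smul_smul, Complex.conj_conj]
      rw [hβ, hc]
      ring
    rw [hEq] at hp
    exact hp

lemma pos2 {p q y : BH E} (hpa : ContinuousLinearMap.adjoint p = p) (hp2 : p.comp p = p)
    (hqa : ContinuousLinearMap.adjoint q = q) (hq2 : q.comp q = q)
    (hy : p.comp (y.comp q) = y) :
    (matOp !![(‖y‖ : ℂ) • p, y; ContinuousLinearMap.adjoint y, (‖y‖ : ℂ) • q]).IsPositive := by
  set M' : Matrix (Fin 2) (Fin 2) (BH E) :=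
    !![(‖y‖ : ℂ) • p, y; ContinuousLinearMap.adjoint y, (‖y‖ : ℂ) • q] with hM'
  have hps : ∀ a b : E, ⟪p a, b⟫ = ⟪a, p b⟫ := fun a b => by
    conv_lhs => rw [← hpa]
    rw [adjoint_inner_left]
  have hqs : ∀ a b : E, ⟪q a, b⟫ = ⟪a, q b⟫ := fun a b => by
    conv_lhs => rw [← hqa]
    rw [adjoint_inner_left]
  have hpn : ∀ a : E, ⟪p a, a⟫ = ((‖p a‖ : ℂ)) ^ 2 := fun a => by
    conv_lhs => rw [← hp2]
    rw [ContinuousLinearMap.comp_apply, hps]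
    exact inner_self_eq_norm_sq_to_K (𝕜 := ℂ) (p a)
  have hqn : ∀ a : E, ⟪q a, a⟫ = ((‖q a‖ : ℂ)) ^ 2 := fun a => by
    conv_lhs => rw [← hq2]
    rw [ContinuousLinearMap.comp_apply, hqs]
    exact inner_self_eq_norm_sq_to_K (𝕜 := ℂ) (q a)
  have hyy : ∀ a : E, y a = p (y (q a)) := fun a => by
    conv_lhs => rw [← hy]
    simp [ContinuousLinearMap.comp_apply]
  constructor
  · intro v w
    have key : ⟪matOp M' v, w⟫ = ⟪v, matOp M' w⟫ := by
      rw [matOp2_inner, matOp2_inner_right]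
      simp only [hM', Matrix.cons_val', Matrix.cons_val_zero, Matrix.empty_val',
        Matrix.cons_val_fin_one, Matrix.cons_val_one, Matrix.head_cons, Matrix.head_fin_const,
        Matrix.of_apply, ContinuousLinearMap.smul_apply, inner_smul_left, inner_smul_right,
        Complex.conj_ofReal]
      have t1 : ⟪p (v 0), w 0⟫ = ⟪v 0, p (w 0)⟫ := hps _ _
      have t2 : ⟪y (v 1), w 0⟫ = ⟪v 1, (ContinuousLinearMap.adjoint y) (w 0)⟫ := by
        rw [adjoint_inner_right]
      have t3 : ⟪(ContinuousLinearMap.adjoint y) (v 0), w 1⟫ = ⟪v 0, y (w 1)⟫ :=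
        adjoint_inner_left _ _ _
      have t4 : ⟪q (v 1), w 1⟫ = ⟪v 1, q (w 1)⟫ := hqs _ _
      rw [t1, t2, t3, t4]
      ring
    exact key
  · intro v
    show (0:ℝ) ≤ RCLike.re ⟪matOp M' v, v⟫
    rw [RCLike.re_to_complex]
    set a := p (v 0) with ha
    set b := q (v 1) with hb
    set z := ⟪y (v 1), v 0⟫ with hz
    have hEq : ⟪matOp M' v, v⟫
        = ((‖y‖ * ‖a‖ ^ 2 + ‖y‖ * ‖b‖ ^ 2 : ℝ) : ℂ) + (z + (starRingEnd ℂ) z) := by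
      rw [matOp2_inner]
      simp only [hM', Matrix.cons_val', Matrix.cons_val_zero, Matrix.empty_val',
        Matrix.cons_val_fin_one, Matrix.cons_val_one, Matrix.head_cons, Matrix.head_fin_const,
        Matrix.of_apply, ContinuousLinearMap.smul_apply, inner_smul_left,
        Complex.conj_ofReal]
      rw [hpn, hqn]
      have t3 : ⟪(ContinuousLinearMap.adjoint y) (v 0), v 1⟫ = (starRingEnd ℂ) z := by
        rw [adjoint_inner_left, ← inner_conj_symm]
      rw [t3, ← ha, ← hb, ← hz]
      push_cast
      ring
    rw [hEq]
    have hre : (((‖y‖ * ‖a‖ ^ 2 + ‖y‖ * ‖b‖ ^ 2 : ℝ) : ℂ) + (z + (starRingEnd ℂ) z)).re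
        = ‖y‖ * ‖a‖ ^ 2 + ‖y‖ * ‖b‖ ^ 2 + 2 * z.re := by
      simp [Complex.add_re, Complex.ofReal_re, Complex.conj_re, ← Complex.ofReal_pow]
      ring
    rw [hre]
    have hzb : |z.re| ≤ ‖y‖ * ‖b‖ * ‖a‖ := by
      have hz2 : z = ⟪y b, a⟫ := by rw [hz, hyy (v 1), hps]
      calc |z.re| ≤ ‖z‖ := Complex.abs_re_le_norm z
        _ = ‖z‖ := rfl
        _ ≤ ‖y b‖ * ‖a‖ := by rw [hz2]; exact norm_inner_le_norm _ _
        _ ≤ ‖y‖ * ‖b‖ * ‖a‖ :=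
          mul_le_mul_of_nonneg_right (y.le_opNorm b) (norm_nonneg a)
    have hy0 : (0:ℝ) ≤ ‖y‖ := norm_nonneg y
    nlinarith [sq_nonneg (‖a‖ - ‖b‖), abs_le.mp hzb, norm_nonneg a, norm_nonneg b]

end MatrixAux

section LpAux

variable {X : Type*} [MeasurableSpace X] {μ : Measure X}
  {H : Type*} [NormedAddCommGroup H] [InnerProductSpace ℂ H] [CompleteSpace H]
  {ι : Type*} {e : ι → H} {JC : ι → (Lp ℂ 2 μ →L[ℂ] Lp H 2 μ)}
  {mulC : (X → ℂ) → BH (Lp ℂ 2 μ)} {oTC : BH H → (X → ℂ) → BH (Lp H 2 μ)}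

lemma mInfty_const (c : ℂ) : (fun _ : X => c) ∈ MInfty X :=
  ⟨measurable_const, ‖c‖, fun _ => le_rfl⟩

lemma mInfty_one : (fun _ : X => (1:ℂ)) ∈ MInfty X := mInfty_const 1

lemma mInfty_smul {f : X → ℂ} (hf : f ∈ MInfty X) (c : ℂ) : c • f ∈ MInfty X := by
  obtain ⟨hm, C, hC⟩ := hf
  refine ⟨hm.const_smul c, ‖c‖ * C, fun x => ?_⟩
  rw [Pi.smul_apply, norm_smul]
  exact mul_le_mul_of_nonneg_left (hC x) (norm_nonneg c)

lemma mInfty_add {f g : X → ℂ} (hf : f ∈ MInfty X) (hg : g ∈ MInfty X) :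
    f + g ∈ MInfty X := by
  obtain ⟨hm, C, hC⟩ := hf; obtain ⟨hm', C', hC'⟩ := hg
  exact ⟨hm.add hm', C + C', fun x => (norm_add_le _ _).trans (add_le_add (hC x) (hC' x))⟩

lemma mInfty_mul {f g : X → ℂ} (hf : f ∈ MInfty X) (hg : g ∈ MInfty X) :
    f * g ∈ MInfty X := by
  obtain ⟨hm, C, hC⟩ := hf; obtain ⟨hm', C', hC'⟩ := hg
  refine ⟨hm.mul hm', C * C', fun x => ?_⟩
  rw [Pi.mul_apply, norm_mul]
  exact mul_le_mul (hC x) (hC' x) (norm_nonneg _) ((norm_nonneg _).trans (hC x))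

lemma mInfty_star {f : X → ℂ} (hf : f ∈ MInfty X) : star f ∈ MInfty X := by
  obtain ⟨hm, C, hC⟩ := hf
  refine ⟨continuous_star.measurable.comp hm, C, fun x => ?_⟩
  rw [Pi.star_apply, norm_star]
  exact hC x

lemma eq_mulC (hmulC : IsMulRepL μ mulC) {f : X → ℂ} (hf : f ∈ MInfty X)
    {T : BH (Lp ℂ 2 μ)}
    (h : ∀ ξ : Lp ℂ 2 μ, ⇑(T ξ) =ᵐ[μ] fun x => f x • ξ x) : T = mulC f :=
  ContinuousLinearMap.ext fun ξ => Lp.ext ((h ξ).trans (hmulC f hf ξ).symm)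

lemma mulC_one (hmulC : IsMulRepL μ mulC) : mulC (fun _ => (1:ℂ)) = 1 := by
  symm
  refine eq_mulC hmulC mInfty_one fun ξ => ?_
  simp only [ContinuousLinearMap.one_apply, one_smul]
  exact Filter.EventuallyEq.rfl

lemma mulC_zero (hmulC : IsMulRepL μ mulC) : mulC (fun _ => (0:ℂ)) = 0 := by
  symm
  refine eq_mulC hmulC (mInfty_const 0) fun ξ => ?_
  simp only [ContinuousLinearMap.zero_apply, zero_smul]
  exact Lp.coeFn_zero _ _ _

lemma mulC_smul (hmulC : IsMulRepL μ mulC) {f : X → ℂ} (hf : f ∈ MInfty X) (c : ℂ) :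
    mulC (c • f) = c • mulC f := by
  symm
  refine eq_mulC hmulC (mInfty_smul hf c) fun ξ => ?_
  have h0 : (c • mulC f) ξ = c • (mulC f ξ) := rfl
  rw [h0]
  filter_upwards [Lp.coeFn_smul c (mulC f ξ), hmulC f hf ξ] with x h1 h2
  rw [h1, Pi.smul_apply, h2, Pi.smul_apply, smul_smul, smul_eq_mul]
  simp [smul_eq_mul]

lemma mulC_add (hmulC : IsMulRepL μ mulC) {f g : X → ℂ} (hf : f ∈ MInfty X)
    (hg : g ∈ MInfty X) : mulC (f + g) = mulC f + mulC g := by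
  symm
  refine eq_mulC hmulC (mInfty_add hf hg) fun ξ => ?_
  have h0 : (mulC f + mulC g) ξ = mulC f ξ + mulC g ξ := rfl
  rw [h0]
  filter_upwards [Lp.coeFn_add (mulC f ξ) (mulC g ξ), hmulC f hf ξ, hmulC g hg ξ]
    with x h1 h2 h3
  rw [h1, Pi.add_apply, h2, h3, Pi.add_apply, add_smul]

lemma mulC_star (hmulC : IsMulRepL μ mulC) {f : X → ℂ} (hf : f ∈ MInfty X) :
    ContinuousLinearMap.adjoint (mulC f) = mulC (star f) := by
  symm
  rw [ContinuousLinearMap.eq_adjoint_iff]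
  intro ξ η
  rw [L2.inner_def, L2.inner_def]
  refine integral_congr_ae ?_
  filter_upwards [hmulC _ (mInfty_star hf) ξ, hmulC f hf η] with x h1 h2
  rw [h1, h2, inner_smul_left, inner_smul_right, Pi.star_apply, RCLike.star_def,
    Complex.conj_conj]

-- membership lemmas for the image set
lemma S_smul (hmulC : IsMulRepL μ mulC) {T : BH (Lp ℂ 2 μ)}
    (hT : T ∈ mulC '' MInfty X) (c : ℂ) : c • T ∈ mulC '' MInfty X := by
  obtain ⟨f, hf, rfl⟩ := hT
  exact ⟨c • f, mInfty_smul hf c, mulC_smul hmulC hf c⟩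

lemma S_add (hmulC : IsMulRepL μ mulC) {T T' : BH (Lp ℂ 2 μ)}
    (hT : T ∈ mulC '' MInfty X) (hT' : T' ∈ mulC '' MInfty X) :
    T + T' ∈ mulC '' MInfty X := by
  obtain ⟨f, hf, rfl⟩ := hT; obtain ⟨g, hg, rfl⟩ := hT'
  exact ⟨f + g, mInfty_add hf hg, mulC_add hmulC hf hg⟩

lemma S_one (hmulC : IsMulRepL μ mulC) : (1 : BH (Lp ℂ 2 μ)) ∈ mulC '' MInfty X :=
  ⟨fun _ => 1, mInfty_one, mulC_one hmulC⟩

lemma S_zero (hmulC : IsMulRepL μ mulC) : (0 : BH (Lp ℂ 2 μ)) ∈ mulC '' MInfty X :=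
  ⟨fun _ => 0, mInfty_const 0, mulC_zero hmulC⟩

lemma S_star (hmulC : IsMulRepL μ mulC) {T : BH (Lp ℂ 2 μ)}
    (hT : T ∈ mulC '' MInfty X) : ContinuousLinearMap.adjoint T ∈ mulC '' MInfty X := by
  obtain ⟨f, hf, rfl⟩ := hT
  exact ⟨star f, mInfty_star hf, (mulC_star hmulC hf).symm⟩

-- J lemmas
lemma Jadj_apply (hJC : IsTensorIsometriesL μ e JC) (i : ι) (ξ : Lp H 2 μ) :
    ⇑(ContinuousLinearMap.adjoint (JC i) ξ) =ᵐ[μ] fun x => (inner ℂ (e i) (ξ x) : ℂ) := by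
  have hg : MemLp (fun x => (inner ℂ (e i) (ξ x) : ℂ)) 2 μ := (Lp.memLp ξ).const_inner (e i)
  have key : ContinuousLinearMap.adjoint (JC i) ξ = hg.toLp _ := by
    refine ext_inner_left ℂ fun k => ?_
    rw [ContinuousLinearMap.adjoint_inner_right]
    rw [L2.inner_def, L2.inner_def]
    refine integral_congr_ae ?_
    filter_upwards [hJC.2.2 i k, hg.coeFn_toLp] with x h1 h2
    rw [h1, h2, inner_smul_left, RCLike.inner_apply, mul_comm]
  rw [key]
  exact hg.coeFn_toLp

lemma Jadj_comp_J (hJC : IsTensorIsometriesL μ e JC) (k l : ι) :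
    (ContinuousLinearMap.adjoint (JC k)).comp (JC l)
      = (inner ℂ (e k) (e l) : ℂ) • (1 : BH (Lp ℂ 2 μ)) := by
  refine ContinuousLinearMap.ext fun κ => Lp.ext ?_
  filter_upwards [Jadj_apply hJC k ((JC l) κ), hJC.2.2 l κ,
    Lp.coeFn_smul ((inner ℂ (e k) (e l) : ℂ)) κ] with x h1 h2 h3
  show (ContinuousLinearMap.adjoint (JC k)) ((JC l) κ) x
    = (((inner ℂ (e k) (e l) : ℂ) • (1 : BH (Lp ℂ 2 μ))) κ) x
  rw [h1, h2, inner_smul_right]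
  have h5 : (((inner ℂ (e k) (e l) : ℂ) • (1 : BH (Lp ℂ 2 μ))) κ)
      = (inner ℂ (e k) (e l) : ℂ) • κ := rfl
  rw [h5, h3, Pi.smul_apply, smul_eq_mul, mul_comm]

/-- The rank one operator `h ↦ ⟪e j, h⟫ • e i`. -/
def theta {H : Type*} [NormedAddCommGroup H] [InnerProductSpace ℂ H] [CompleteSpace H]
    {ι : Type*} (e : ι → H) (i j : ι) : BH H :=
  (ContinuousLinearMap.toSpanSingleton ℂ (e i)).comp (innerSL ℂ (e j))

lemma theta_apply (i j : ι) (h : H) : theta e i j h = (inner ℂ (e j) h : ℂ) • e i := by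
  simp [theta, ContinuousLinearMap.toSpanSingleton_apply]

lemma adjoint_theta (i j : ι) :
    ContinuousLinearMap.adjoint (theta e i j) = theta e j i := by
  symm
  rw [ContinuousLinearMap.eq_adjoint_iff]
  intro a b
  simp only [theta_apply, inner_smul_left, inner_smul_right]
  rw [← inner_conj_symm a (e i)]
  ring

-- oTC lemmas
lemma eq_oTC (hoTC : IsElemTensorRepL μ oTC) (T' : BH H) {f : X → ℂ} (hf : f ∈ MInfty X)
    {S : BH (Lp H 2 μ)}
    (h : ∀ ξ : Lp H 2 μ, ⇑(S ξ) =ᵐ[μ] fun x => f x • T' (ξ x)) : S = oTC T' f :=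
  ContinuousLinearMap.ext fun ξ => Lp.ext ((h ξ).trans (hoTC T' f hf ξ).symm)

lemma oTC_congr (hoTC : IsElemTensorRepL μ oTC) (T : BH H) {f g : X → ℂ}
    (hf : f ∈ MInfty X) (hg : g ∈ MInfty X) (hfg : f =ᵐ[μ] g) : oTC T f = oTC T g := by
  refine eq_oTC hoTC T hg fun ξ => ?_
  filter_upwards [hoTC T f hf ξ, hfg] with x h1 h2
  rw [h1, h2]

lemma oTC_comp (hoTC : IsElemTensorRepL μ oTC) (P Q : BH H) {f g : X → ℂ}
    (hf : f ∈ MInfty X) (hg : g ∈ MInfty X) :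
    (oTC P f).comp (oTC Q g) = oTC (P.comp Q) (f * g) := by
  refine eq_oTC hoTC _ (mInfty_mul hf hg) fun ξ => ?_
  have h0 : ((oTC P f).comp (oTC Q g)) ξ = (oTC P f) ((oTC Q g) ξ) := rfl
  rw [h0]
  filter_upwards [hoTC P f hf ((oTC Q g) ξ), hoTC Q g hg ξ] with x h1 h2
  rw [h1, h2]
  simp [_root_.map_smul, smul_smul, ContinuousLinearMap.comp_apply, Pi.mul_apply, mul_comm]

lemma oTC_one (hoTC : IsElemTensorRepL μ oTC) :
    oTC (1 : BH H) (fun _ => (1:ℂ)) = 1 := by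
  symm
  refine eq_oTC hoTC 1 mInfty_one fun ξ => ?_
  simp only [ContinuousLinearMap.one_apply, one_smul]
  exact Filter.EventuallyEq.rfl

lemma oTC_sub (hoTC : IsElemTensorRepL μ oTC) (P Q : BH H) {f : X → ℂ}
    (hf : f ∈ MInfty X) : oTC (P - Q) f = oTC P f - oTC Q f := by
  symm
  refine eq_oTC hoTC _ hf fun ξ => ?_
  have h0 : (oTC P f - oTC Q f) ξ = oTC P f ξ - oTC Q f ξ := rfl
  rw [h0]
  filter_upwards [Lp.coeFn_sub (oTC P f ξ) (oTC Q f ξ), hoTC P f hf ξ, hoTC Q f hf ξ]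
    with x h1 h2 h3
  rw [h1, Pi.sub_apply, h2, h3, ContinuousLinearMap.sub_apply, smul_sub]

lemma oTC_adjoint (hoTC : IsElemTensorRepL μ oTC) (T : BH H) {f : X → ℂ}
    (hf : f ∈ MInfty X) :
    ContinuousLinearMap.adjoint (oTC T f) = oTC (ContinuousLinearMap.adjoint T) (star f) := by
  symm
  rw [ContinuousLinearMap.eq_adjoint_iff]
  intro ξ η
  rw [L2.inner_def, L2.inner_def]
  refine integral_congr_ae ?_
  filter_upwards [hoTC _ (star f) (mInfty_star hf) ξ, hoTC T f hf η] with x h1 h2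
  rw [h1, h2, inner_smul_left, inner_smul_right, Pi.star_apply, RCLike.star_def,
    Complex.conj_conj, ContinuousLinearMap.adjoint_inner_left]

lemma slice_oTC (hJC : IsTensorIsometriesL μ e JC) (hmulC : IsMulRepL μ mulC)
    (hoTC : IsElemTensorRepL μ oTC) (T : BH H) {f : X → ℂ} (hf : f ∈ MInfty X) (k l : ι) :
    (ContinuousLinearMap.adjoint (JC k)).comp ((oTC T f).comp (JC l))
      = mulC ((inner ℂ (e k) (T (e l)) : ℂ) • f) := by
  refine ContinuousLinearMap.ext fun κ => Lp.ext ?_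
  filter_upwards [Jadj_apply hJC k ((oTC T f) ((JC l) κ)), hoTC T f hf ((JC l) κ),
    hJC.2.2 l κ, hmulC _ (mInfty_smul hf _) κ] with x h1 h2 h3 h4
  show (ContinuousLinearMap.adjoint (JC k)) ((oTC T f) ((JC l) κ)) x = (mulC _ κ) x
  rw [h1, h2, h3, h4]
  simp only [_root_.map_smul, inner_smul_right, Pi.smul_apply, smul_eq_mul]
  ring

lemma J_mulC_Jadj (hJC : IsTensorIsometriesL μ e JC) (hmulC : IsMulRepL μ mulC)
    (hoTC : IsElemTensorRepL μ oTC) {f : X → ℂ} (hf : f ∈ MInfty X) (i j : ι) :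
    (JC i).comp ((mulC f).comp (ContinuousLinearMap.adjoint (JC j))) = oTC (theta e i j) f := by
  refine eq_oTC hoTC _ hf fun ξ => ?_
  filter_upwards [hJC.2.2 i ((mulC f) ((ContinuousLinearMap.adjoint (JC j)) ξ)),
    hmulC f hf ((ContinuousLinearMap.adjoint (JC j)) ξ), Jadj_apply hJC j ξ] with x h1 h2 h3
  show (JC i) ((mulC f) ((ContinuousLinearMap.adjoint (JC j)) ξ)) x = _
  rw [h1, h2, h3]
  simp [theta_apply, smul_smul]

lemma pJJ (hJC : IsTensorIsometriesL μ e JC) (hmulC : IsMulRepL μ mulC)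
    (hoTC : IsElemTensorRepL μ oTC) (i : ι) :
    oTC (theta e i i) (fun _ => (1:ℂ))
      = (JC i).comp (ContinuousLinearMap.adjoint (JC i)) := by
  rw [← J_mulC_Jadj hJC hmulC hoTC mInfty_one i i, mulC_one hmulC]
  refine ContinuousLinearMap.ext fun ξ => ?_
  simp [ContinuousLinearMap.comp_apply]

lemma pxp_eq (hJC : IsTensorIsometriesL μ e JC) (hmulC : IsMulRepL μ mulC)
    (hoTC : IsElemTensorRepL μ oTC) {x : BH (Lp H 2 μ)} {f : X → ℂ} (hf : f ∈ MInfty X)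
    (i j : ι)
    (hslice : (ContinuousLinearMap.adjoint (JC i)).comp (x.comp (JC j)) = mulC f) :
    (oTC (theta e i i) (fun _ => (1:ℂ))).comp
        (x.comp (oTC (theta e j j) (fun _ => (1:ℂ)))) = oTC (theta e i j) f := by
  rw [pJJ hJC hmulC hoTC i, pJJ hJC hmulC hoTC j, ← J_mulC_Jadj hJC hmulC hoTC hf i j,
    ← hslice]
  refine ContinuousLinearMap.ext fun ξ => ?_
  simp [ContinuousLinearMap.comp_apply]

lemma oTC_one_comp_J (hJC : IsTensorIsometriesL μ e JC) (hoTC : IsElemTensorRepL μ oTC)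
    {P : BH H} {j m : ι} {c : ℂ} (h : P (e j) = c • e m) :
    (oTC P (fun _ => (1:ℂ))).comp (JC j) = c • JC m := by
  refine ContinuousLinearMap.ext fun κ => Lp.ext ?_
  filter_upwards [hoTC P _ mInfty_one ((JC j) κ), hJC.2.2 j κ, hJC.2.2 m κ,
    Lp.coeFn_smul c ((JC m) κ)] with x h1 h2 h3 h4
  show (oTC P _) ((JC j) κ) x = ((c • JC m) κ) x
  have h5 : ((c • JC m) κ) = c • ((JC m) κ) := rfl
  rw [h1, h2, h5, h4, one_smul, _root_.map_smul, h, Pi.smul_apply, h3, smul_smul, smul_smul,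
    mul_comm]

-- fubini membership lemmas
lemma AC_add (hmulC : IsMulRepL μ mulC) {x y : BH (Lp H 2 μ)}
    (hx : x ∈ fubini JC (mulC '' MInfty X)) (hy : y ∈ fubini JC (mulC '' MInfty X)) :
    x + y ∈ fubini JC (mulC '' MInfty X) := by
  intro k l
  have h0 : (ContinuousLinearMap.adjoint (JC k)).comp ((x + y).comp (JC l))
      = (ContinuousLinearMap.adjoint (JC k)).comp (x.comp (JC l))
        + (ContinuousLinearMap.adjoint (JC k)).comp (y.comp (JC l)) := by
    refine ContinuousLinearMap.ext fun ξ => ?_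
    simp [ContinuousLinearMap.comp_apply, ContinuousLinearMap.add_apply]
  rw [h0]
  exact S_add hmulC (hx k l) (hy k l)

lemma AC_smul (hmulC : IsMulRepL μ mulC) {x : BH (Lp H 2 μ)}
    (hx : x ∈ fubini JC (mulC '' MInfty X)) (c : ℂ) :
    c • x ∈ fubini JC (mulC '' MInfty X) := by
  intro k l
  have h0 : (ContinuousLinearMap.adjoint (JC k)).comp ((c • x).comp (JC l))
      = c • ((ContinuousLinearMap.adjoint (JC k)).comp (x.comp (JC l))) := by
    refine ContinuousLinearMap.ext fun ξ => ?_
    simp [ContinuousLinearMap.comp_apply]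
  rw [h0]
  exact S_smul hmulC (hx k l) c

lemma AC_star (hmulC : IsMulRepL μ mulC) {x : BH (Lp H 2 μ)}
    (hx : x ∈ fubini JC (mulC '' MInfty X)) :
    ContinuousLinearMap.adjoint x ∈ fubini JC (mulC '' MInfty X) := by
  intro k l
  have h0 : (ContinuousLinearMap.adjoint (JC k)).comp
        ((ContinuousLinearMap.adjoint x).comp (JC l))
      = ContinuousLinearMap.adjoint
          ((ContinuousLinearMap.adjoint (JC l)).comp (x.comp (JC k))) := by
    rw [ContinuousLinearMap.adjoint_comp, ContinuousLinearMap.adjoint_comp,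
      ContinuousLinearMap.adjoint_adjoint]
    refine ContinuousLinearMap.ext fun ξ => ?_
    simp [ContinuousLinearMap.comp_apply]
  rw [h0]
  exact S_star hmulC (hx l k)

lemma AC_one (hJC : IsTensorIsometriesL μ e JC) (hmulC : IsMulRepL μ mulC) :
    (1 : BH (Lp H 2 μ)) ∈ fubini JC (mulC '' MInfty X) := by
  intro k l
  have h0 : (ContinuousLinearMap.adjoint (JC k)).comp ((1 : BH (Lp H 2 μ)).comp (JC l))
      = (ContinuousLinearMap.adjoint (JC k)).comp (JC l) := by
    refine ContinuousLinearMap.ext fun ξ => ?_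
    simp [ContinuousLinearMap.comp_apply]
  rw [h0, Jadj_comp_J hJC]
  exact S_smul hmulC (S_one hmulC) _

lemma AC_elem (hJC : IsTensorIsometriesL μ e JC) (hmulC : IsMulRepL μ mulC)
    (hoTC : IsElemTensorRepL μ oTC) (T : BH H) {f : X → ℂ} (hf : f ∈ MInfty X) :
    oTC T f ∈ fubini JC (mulC '' MInfty X) := by
  intro k l
  exact ⟨(inner ℂ (e k) (T (e l)) : ℂ) • f, mInfty_smul hf _,
    (slice_oTC hJC hmulC hoTC T hf k l).symm⟩

lemma AC_sandwich (hmulC : IsMulRepL μ mulC) {x : BH (Lp H 2 μ)}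
    (hx : x ∈ fubini JC (mulC '' MInfty X)) {Pc Qc : BH (Lp H 2 μ)}
    (hP : ∀ k : ι, ∃ (c : ℂ) (m : ι),
      (ContinuousLinearMap.adjoint (JC k)).comp Pc
        = c • (ContinuousLinearMap.adjoint (JC m)))
    (hQ : ∀ l : ι, ∃ (c : ℂ) (m : ι), Qc.comp (JC l) = c • JC m) :
    Pc.comp (x.comp Qc) ∈ fubini JC (mulC '' MInfty X) := by
  intro k l
  obtain ⟨cP, mP, hP1⟩ := hP k
  obtain ⟨cQ, mQ, hQ1⟩ := hQ l
  have e1 : ∀ ξ : Lp H 2 μ, (ContinuousLinearMap.adjoint (JC k)) (Pc ξ)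
      = cP • (ContinuousLinearMap.adjoint (JC mP)) ξ := fun ξ => by
    have h := congrArg (fun A : Lp H 2 μ →L[ℂ] Lp ℂ 2 μ => A ξ) hP1
    simpa [ContinuousLinearMap.comp_apply] using h
  have e2 : ∀ κ : Lp ℂ 2 μ, Qc ((JC l) κ) = cQ • (JC mQ) κ := fun κ => by
    have h := congrArg (fun A : Lp ℂ 2 μ →L[ℂ] Lp H 2 μ => A κ) hQ1
    simpa [ContinuousLinearMap.comp_apply] using h
  have key : (ContinuousLinearMap.adjoint (JC k)).comp ((Pc.comp (x.comp Qc)).comp (JC l))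
      = (cP * cQ) • ((ContinuousLinearMap.adjoint (JC mP)).comp (x.comp (JC mQ))) := by
    refine ContinuousLinearMap.ext fun κ => ?_
    simp only [ContinuousLinearMap.comp_apply, ContinuousLinearMap.smul_apply]
    rw [e2, _root_.map_smul, e1, _root_.map_smul, smul_smul]
  rw [key]
  exact S_smul hmulC (hx mP mQ) _

-- totality
lemma J_total (hJC : IsTensorIsometriesL μ e JC) {η : Lp H 2 μ}
    (h : ∀ i, ContinuousLinearMap.adjoint (JC i) η = 0) : η = 0 := by
  classical
  obtain ⟨G, hGsm, hGeq⟩ := Lp.aestronglyMeasurable η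
  obtain ⟨cs, hcc, hcsub⟩ := hGsm.isSeparable_range
  have hsupp : ∀ z : H, {i : ι | (inner ℂ (e i) z : ℂ) ≠ 0}.Countable := by
    intro z
    have hsum : Summable fun i => ‖(inner ℂ (e i) z : ℂ)‖ ^ 2 :=
      Orthonormal.inner_products_summable (x := z) hJC.1
    refine hsum.countable_support.mono fun i hi => ?_
    simp only [Set.mem_setOf_eq] at hi
    simp only [Function.mem_support]
    intro h0
    exact hi (by simpa [pow_eq_zero_iff, norm_eq_zero] using h0)
  set C : Set ι := ⋃ z ∈ cs, {i : ι | (inner ℂ (e i) z : ℂ) ≠ 0} with hC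
  have hCc : C.Countable := hcc.biUnion fun z _ => hsupp z
  have hzero : ∀ i ∈ C, ∀ᵐ x ∂μ, (inner ℂ (e i) (G x) : ℂ) = 0 := by
    intro i _
    have h1 := Jadj_apply hJC i η
    rw [h i] at h1
    filter_upwards [h1, Lp.coeFn_zero ℂ 2 μ, hGeq] with x h2 h3 h4
    rw [← h4, ← h2, h3, Pi.zero_apply]
  have hae := (ae_ball_iff hCc).mpr hzero
  have hG0 : ∀ᵐ x ∂μ, G x = 0 := by
    filter_upwards [hae] with x hx
    have hall : ∀ i, (inner ℂ (e i) (G x) : ℂ) = 0 := by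
      intro i
      by_cases hiC : i ∈ C
      · exact hx i hiC
      · have hzc : ∀ z ∈ cs, (inner ℂ (e i) z : ℂ) = 0 := by
          intro z hz
          by_contra h0
          exact hiC (Set.mem_biUnion hz h0)
        have hGc : G x ∈ closure cs := hcsub (Set.mem_range_self x)
        have hker : closure cs ⊆ {v : H | (inner ℂ (e i) v : ℂ) = 0} := by
          refine closure_minimal (fun z hz => hzc z hz) ?_
          exact isClosed_eq (Continuous.inner continuous_const continuous_id) continuous_const
        exact hker hGc
    have hsub : Submodule.span ℂ (Set.range e) ≤ LinearMap.ker (innerSL ℂ (G x) : H →ₗ[ℂ] ℂ) := by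
      rw [Submodule.span_le]
      rintro _ ⟨i, rfl⟩
      simp only [SetLike.mem_coe, LinearMap.mem_ker, ContinuousLinearMap.coe_coe,
        innerSL_apply_apply]
      rw [← inner_conj_symm, hall i, map_zero]
    have hclosed : IsClosed ((LinearMap.ker (innerSL ℂ (G x) : H →ₗ[ℂ] ℂ) : Submodule ℂ H) : Set H) :=
      ContinuousLinearMap.isClosed_ker (innerSL ℂ (G x))
    have htop := Submodule.topologicalClosure_minimal _ hsub hclosed
    rw [hJC.2.1] at htop
    have hmem : G x ∈ LinearMap.ker (innerSL ℂ (G x) : H →ₗ[ℂ] ℂ) := htop Submodule.mem_top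
    have h0 : (inner ℂ (G x) (G x) : ℂ) = 0 := by simpa using hmem
    exact inner_self_eq_zero.mp h0
  refine Lp.ext ?_
  filter_upwards [hGeq, hG0, Lp.coeFn_zero H 2 μ] with x h1 h2 h3
  rw [h1, h2, h3, Pi.zero_apply]

lemma zero_of_slices (hJC : IsTensorIsometriesL μ e JC) {D : BH (Lp H 2 μ)}
    (h : ∀ i j, (ContinuousLinearMap.adjoint (JC i)).comp (D.comp (JC j)) = 0) :
    D = 0 := by
  have hD1 : ∀ (j : ι) (k : Lp ℂ 2 μ), D ((JC j) k) = 0 := by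
    intro j k
    refine J_total hJC fun i => ?_
    have h0 := congrArg (fun A : Lp ℂ 2 μ →L[ℂ] Lp ℂ 2 μ => A k) (h i j)
    simpa [ContinuousLinearMap.comp_apply] using h0
  have hDadj : ∀ (j : ι) (k : Lp ℂ 2 μ), (ContinuousLinearMap.adjoint D) ((JC j) k) = 0 := by
    intro j k
    refine J_total hJC fun i => ?_
    refine ext_inner_left ℂ fun v => ?_
    rw [inner_zero_right, ContinuousLinearMap.adjoint_inner_right,
      ContinuousLinearMap.adjoint_inner_right, hD1 i v, inner_zero_left]
  refine ContinuousLinearMap.ext fun ζ => ?_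
  rw [ContinuousLinearMap.zero_apply]
  refine J_total hJC fun i => ?_
  refine ext_inner_left ℂ fun v => ?_
  rw [inner_zero_right, ContinuousLinearMap.adjoint_inner_right,
    ← ContinuousLinearMap.adjoint_inner_left D, hDadj i v, inner_zero_left]

end LpAux
section MainAux

set_option maxHeartbeats 1000000
set_option synthInstance.maxHeartbeats 400000

variable {X : Type*} [MeasurableSpace X] {μ : Measure X}
  {H : Type*} [NormedAddCommGroup H] [InnerProductSpace ℂ H] [CompleteSpace H]
  {ι : Type*} {e : ι → H} {JC : ι → (Lp ℂ 2 μ →L[ℂ] Lp H 2 μ)}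
  {mulC : (X → ℂ) → BH (Lp ℂ 2 μ)} {oTC : BH H → (X → ℂ) → BH (Lp H 2 μ)}

lemma psi_offdiag_zero (hmulC : IsMulRepL μ mulC)
    {Ψ : BH (Lp H 2 μ) → BH (Lp H 2 μ)}
    (hΨcp : IsCompletelyPositiveOn Ψ (fubini JC (mulC '' MInfty X)))
    (hΨsmul : ∀ (c : ℂ), ∀ z ∈ fubini JC (mulC '' MInfty X), Ψ (c • z) = c • Ψ z)
    {P Q y : BH (Lp H 2 μ)}
    (hPa : ContinuousLinearMap.adjoint P = P) (hP2 : P.comp P = P)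
    (hQa : ContinuousLinearMap.adjoint Q = Q) (hQ2 : Q.comp Q = Q)
    (hyPQ : P.comp (y.comp Q) = y)
    (hyA : y ∈ fubini JC (mulC '' MInfty X))
    (hyadjA : ContinuousLinearMap.adjoint y ∈ fubini JC (mulC '' MInfty X))
    (hPA : P ∈ fubini JC (mulC '' MInfty X)) (hQA : Q ∈ fubini JC (mulC '' MInfty X))
    (hΨP : Ψ P = P) (hΨQ : Ψ Q = Q)
    {u w : Lp H 2 μ} (hcase : Q w = 0 ∨ P u = 0) :
    (inner ℂ ((Ψ y) w) u : ℂ) = 0 := by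
  set M : Matrix (Fin 2) (Fin 2) (BH (Lp H 2 μ)) :=
    !![(‖y‖ : ℂ) • P, y; ContinuousLinearMap.adjoint y, (‖y‖ : ℂ) • Q] with hM
  have hpos : (matOp M).IsPositive := pos2 hPa hP2 hQa hQ2 hyPQ
  have hent : entriesIn M (fubini JC (mulC '' MInfty X)) := by
    intro a b
    fin_cases a <;> fin_cases b
    exacts [AC_smul hmulC hPA _, hyA, hyadjA, AC_smul hmulC hQA _]
  have hpos2 := hΨcp 2 M hent hpos
  have h01 : (M.map Ψ) 0 1 = Ψ y := rfl
  have h00 : (M.map Ψ) 0 0 = (‖y‖ : ℂ) • P := by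
    have h0 : (M.map Ψ) 0 0 = Ψ ((‖y‖ : ℂ) • P) := rfl
    rw [h0, hΨsmul _ _ hPA, hΨP]
  have h11 : (M.map Ψ) 1 1 = (‖y‖ : ℂ) • Q := by
    have h0 : (M.map Ψ) 1 1 = Ψ ((‖y‖ : ℂ) • Q) := rfl
    rw [h0, hΨsmul _ _ hQA, hΨQ]
  have hyp : (inner ℂ ((M.map Ψ) 1 1 w) w : ℂ) = 0 ∨ (inner ℂ ((M.map Ψ) 0 0 u) u : ℂ) = 0 := by
    rcases hcase with hc | hc
    · left; rw [h11, ContinuousLinearMap.smul_apply, hc, smul_zero, inner_zero_left]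
    · right; rw [h00, ContinuousLinearMap.smul_apply, hc, smul_zero, inner_zero_left]
  have key := slice_zero hpos2 u w hyp
  rw [h01] at key
  exact key

lemma psi_slice (hJC : IsTensorIsometriesL μ e JC) (hmulC : IsMulRepL μ mulC)
    (hoTC : IsElemTensorRepL μ oTC) {Ψ : BH (Lp H 2 μ) → BH (Lp H 2 μ)}
    (hΨlin : IsLinearOn Ψ (fubini JC (mulC '' MInfty X)))
    (hΨcp : IsCompletelyPositiveOn Ψ (fubini JC (mulC '' MInfty X)))
    (hΨfix : ∀ (T : BH H), ∀ f ∈ MInfty X, Ψ (oTC T f) = oTC T f)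
    {x : BH (Lp H 2 μ)} (hx : x ∈ fubini JC (mulC '' MInfty X)) (i j : ι) :
    (ContinuousLinearMap.adjoint (JC i)).comp ((Ψ x).comp (JC j))
      = (ContinuousLinearMap.adjoint (JC i)).comp (x.comp (JC j)) := by
  classical
  have horth : ∀ k l : ι, (inner ℂ (e k) (e l) : ℂ) = if k = l then 1 else 0 := by
    intro k l
    by_cases h : k = l
    · subst h
      rw [if_pos rfl]
      have h1 : (inner ℂ (e k) (e k) : ℂ) = ((‖e k‖ : ℂ)) ^ 2 :=
        inner_self_eq_norm_sq_to_K (𝕜 := ℂ) (e k)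
      rw [h1, hJC.1.1 k]
      norm_num
    · rw [if_neg h]
      exact hJC.1.2 h
  have hθidem : ∀ k : ι, (theta e k k).comp (theta e k k) = theta e k k := fun k => by
    refine ContinuousLinearMap.ext fun h => ?_
    simp [theta_apply, ContinuousLinearMap.comp_apply, inner_smul_right, horth, smul_smul, hJC.1.1 k]
  have honemul : ((fun _ : X => (1:ℂ)) * fun _ => (1:ℂ)) = fun _ : X => (1:ℂ) := by
    funext z; simp
  have hstar1 : (star fun _ : X => (1:ℂ)) = fun _ : X => (1:ℂ) := by
    funext z; simp
  have hPadj : ∀ k : ι, ContinuousLinearMap.adjoint (oTC (theta e k k) (fun _ => (1:ℂ)))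
      = oTC (theta e k k) (fun _ => (1:ℂ)) := fun k => by
    rw [oTC_adjoint hoTC _ mInfty_one, adjoint_theta, hstar1]
  have hPidem : ∀ k : ι,
      (oTC (theta e k k) (fun _ => (1:ℂ))).comp (oTC (theta e k k) (fun _ => (1:ℂ)))
        = oTC (theta e k k) (fun _ => (1:ℂ)) := fun k => by
    rw [oTC_comp hoTC _ _ mInfty_one mInfty_one, hθidem, honemul]
  have hPJ : ∀ k l : ι, (oTC (theta e k k) (fun _ => (1:ℂ))).comp (JC l)
      = (inner ℂ (e k) (e l) : ℂ) • JC k := fun k l =>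
    oTC_one_comp_J hJC hoTC (theta_apply k k (e l))
  have hQadj : ∀ k : ι, ContinuousLinearMap.adjoint
      ((1 : BH (Lp H 2 μ)) - oTC (theta e k k) (fun _ => (1:ℂ)))
      = (1 : BH (Lp H 2 μ)) - oTC (theta e k k) (fun _ => (1:ℂ)) := fun k => by
    rw [adjoint_subC, adjoint_oneC, hPadj]
  have hPpt : ∀ (k : ι) (ζ : Lp H 2 μ),
      (oTC (theta e k k) (fun _ => (1:ℂ))) ((oTC (theta e k k) (fun _ => (1:ℂ))) ζ)
        = (oTC (theta e k k) (fun _ => (1:ℂ))) ζ := fun k ζ => by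
    have h0 := congrArg (fun A : BH (Lp H 2 μ) => A ζ) (hPidem k)
    simpa [ContinuousLinearMap.comp_apply] using h0
  have hQidem : ∀ k : ι,
      ((1 : BH (Lp H 2 μ)) - oTC (theta e k k) (fun _ => (1:ℂ))).comp
          ((1 : BH (Lp H 2 μ)) - oTC (theta e k k) (fun _ => (1:ℂ)))
        = (1 : BH (Lp H 2 μ)) - oTC (theta e k k) (fun _ => (1:ℂ)) := fun k => by
    refine ContinuousLinearMap.ext fun ζ => ?_
    simp only [ContinuousLinearMap.comp_apply, ContinuousLinearMap.sub_apply,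
      ContinuousLinearMap.one_apply, map_sub, hPpt k]
    abel
  have hQpt : ∀ (k : ι) (ζ : Lp H 2 μ),
      ((1 : BH (Lp H 2 μ)) - oTC (theta e k k) (fun _ => (1:ℂ)))
          (((1 : BH (Lp H 2 μ)) - oTC (theta e k k) (fun _ => (1:ℂ))) ζ)
        = ((1 : BH (Lp H 2 μ)) - oTC (theta e k k) (fun _ => (1:ℂ))) ζ := fun k ζ => by
    have h0 := congrArg (fun A : BH (Lp H 2 μ) => A ζ) (hQidem k)
    simpa [ContinuousLinearMap.comp_apply] using h0
  -- existence forms for sandwich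
  have hPex : ∀ k l : ι, ∃ (c : ℂ) (m : ι),
      (oTC (theta e k k) (fun _ => (1:ℂ))).comp (JC l) = c • JC m :=
    fun k l => ⟨_, k, hPJ k l⟩
  have hQex : ∀ k l : ι, ∃ (c : ℂ) (m : ι),
      ((1 : BH (Lp H 2 μ)) - oTC (theta e k k) (fun _ => (1:ℂ))).comp (JC l) = c • JC m := by
    intro k l
    by_cases hkl : k = l
    · subst hkl
      refine ⟨0, k, ?_⟩
      rw [ContinuousLinearMap.sub_comp, hPJ k k, horth k k, if_pos rfl, one_smul,
        ContinuousLinearMap.one_def, ContinuousLinearMap.id_comp, sub_self, zero_smul]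
    · refine ⟨1, l, ?_⟩
      rw [ContinuousLinearMap.sub_comp, hPJ k l, horth k l, if_neg hkl, zero_smul,
        ContinuousLinearMap.one_def, ContinuousLinearMap.id_comp, sub_zero, one_smul]
  have hPadjex : ∀ (P : BH (Lp H 2 μ)), ContinuousLinearMap.adjoint P = P →
      (∀ l : ι, ∃ (c : ℂ) (m : ι), P.comp (JC l) = c • JC m) →
      ∀ l : ι, ∃ (c : ℂ) (m : ι), (ContinuousLinearMap.adjoint (JC l)).comp P
        = c • ContinuousLinearMap.adjoint (JC m) := by
    intro P hadj hJx l
    obtain ⟨c, m, hcm⟩ := hJx l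
    refine ⟨(starRingEnd ℂ) c, m, ?_⟩
    have h0 := congrArg ContinuousLinearMap.adjoint hcm
    rw [ContinuousLinearMap.adjoint_comp, hadj, adjoint_smulC] at h0
    exact h0
  -- memberships
  have hPciA : oTC (theta e i i) (fun _ => (1:ℂ)) ∈ fubini JC (mulC '' MInfty X) :=
    AC_elem hJC hmulC hoTC _ mInfty_one
  have hQoTC : ∀ k : ι, (1 : BH (Lp H 2 μ)) - oTC (theta e k k) (fun _ => (1:ℂ))
      = oTC ((1 : BH H) - theta e k k) (fun _ => (1:ℂ)) := fun k => by
    rw [oTC_sub hoTC _ _ mInfty_one, oTC_one hoTC]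
  have hQciA : (1 : BH (Lp H 2 μ)) - oTC (theta e i i) (fun _ => (1:ℂ))
      ∈ fubini JC (mulC '' MInfty X) := by
    rw [hQoTC i]; exact AC_elem hJC hmulC hoTC _ mInfty_one
  have hQcjA : (1 : BH (Lp H 2 μ)) - oTC (theta e j j) (fun _ => (1:ℂ))
      ∈ fubini JC (mulC '' MInfty X) := by
    rw [hQoTC j]; exact AC_elem hJC hmulC hoTC _ mInfty_one
  have hPcjA : oTC (theta e j j) (fun _ => (1:ℂ)) ∈ fubini JC (mulC '' MInfty X) :=
    AC_elem hJC hmulC hoTC _ mInfty_one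
  -- Ψ fixes the projections
  have hΨPci : Ψ (oTC (theta e i i) (fun _ => (1:ℂ))) = oTC (theta e i i) (fun _ => (1:ℂ)) :=
    hΨfix _ _ mInfty_one
  have hΨPcj : Ψ (oTC (theta e j j) (fun _ => (1:ℂ))) = oTC (theta e j j) (fun _ => (1:ℂ)) :=
    hΨfix _ _ mInfty_one
  have hΨQci : Ψ ((1 : BH (Lp H 2 μ)) - oTC (theta e i i) (fun _ => (1:ℂ)))
      = (1 : BH (Lp H 2 μ)) - oTC (theta e i i) (fun _ => (1:ℂ)) := by
    rw [hQoTC i]; exact hΨfix _ _ mInfty_one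
  have hΨQcj : Ψ ((1 : BH (Lp H 2 μ)) - oTC (theta e j j) (fun _ => (1:ℂ)))
      = (1 : BH (Lp H 2 μ)) - oTC (theta e j j) (fun _ => (1:ℂ)) := by
    rw [hQoTC j]; exact hΨfix _ _ mInfty_one
  -- pieces and memberships
  have ha1A : (oTC (theta e i i) (fun _ => (1:ℂ))).comp
      (x.comp (oTC (theta e j j) (fun _ => (1:ℂ)))) ∈ fubini JC (mulC '' MInfty X) :=
    AC_sandwich hmulC hx (hPadjex _ (hPadj i) (hPex i)) (hPex j)
  have hy1A : (oTC (theta e i i) (fun _ => (1:ℂ))).comp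
      (x.comp ((1 : BH (Lp H 2 μ)) - oTC (theta e j j) (fun _ => (1:ℂ))))
      ∈ fubini JC (mulC '' MInfty X) :=
    AC_sandwich hmulC hx (hPadjex _ (hPadj i) (hPex i)) (hQex j)
  have hy2A : ((1 : BH (Lp H 2 μ)) - oTC (theta e i i) (fun _ => (1:ℂ))).comp
      (x.comp (oTC (theta e j j) (fun _ => (1:ℂ)))) ∈ fubini JC (mulC '' MInfty X) :=
    AC_sandwich hmulC hx (hPadjex _ (hQadj i) (hQex i)) (hPex j)
  have hy3A : ((1 : BH (Lp H 2 μ)) - oTC (theta e i i) (fun _ => (1:ℂ))).comp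
      (x.comp ((1 : BH (Lp H 2 μ)) - oTC (theta e j j) (fun _ => (1:ℂ))))
      ∈ fubini JC (mulC '' MInfty X) :=
    AC_sandwich hmulC hx (hPadjex _ (hQadj i) (hQex i)) (hQex j)
  -- decomposition
  have hdec : x = (oTC (theta e i i) (fun _ => (1:ℂ))).comp
        (x.comp (oTC (theta e j j) (fun _ => (1:ℂ))))
      + (oTC (theta e i i) (fun _ => (1:ℂ))).comp
        (x.comp ((1 : BH (Lp H 2 μ)) - oTC (theta e j j) (fun _ => (1:ℂ))))
      + ((1 : BH (Lp H 2 μ)) - oTC (theta e i i) (fun _ => (1:ℂ))).comp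
        (x.comp (oTC (theta e j j) (fun _ => (1:ℂ))))
      + ((1 : BH (Lp H 2 μ)) - oTC (theta e i i) (fun _ => (1:ℂ))).comp
        (x.comp ((1 : BH (Lp H 2 μ)) - oTC (theta e j j) (fun _ => (1:ℂ)))) := by
    refine ContinuousLinearMap.ext fun ξ => ?_
    simp only [ContinuousLinearMap.add_apply, ContinuousLinearMap.comp_apply,
      ContinuousLinearMap.sub_apply, ContinuousLinearMap.one_apply, map_sub]
    abel
  -- the corner piece is an elementary tensor
  obtain ⟨fij, hfij, hfijeq⟩ := hx i j
  have ha1eq : (oTC (theta e i i) (fun _ => (1:ℂ))).comp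
      (x.comp (oTC (theta e j j) (fun _ => (1:ℂ)))) = oTC (theta e i j) fij :=
    pxp_eq hJC hmulC hoTC hfij i j hfijeq.symm
  have hΨa1 : Ψ ((oTC (theta e i i) (fun _ => (1:ℂ))).comp
      (x.comp (oTC (theta e j j) (fun _ => (1:ℂ)))))
      = (oTC (theta e i i) (fun _ => (1:ℂ))).comp
        (x.comp (oTC (theta e j j) (fun _ => (1:ℂ)))) := by
    rw [ha1eq]; exact hΨfix _ _ hfij
  -- vanishing vectors
  have hQJj : ∀ κ : Lp ℂ 2 μ,
      ((1 : BH (Lp H 2 μ)) - oTC (theta e j j) (fun _ => (1:ℂ))) ((JC j) κ) = 0 := by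
    intro κ
    have h0 : ((1 : BH (Lp H 2 μ)) - oTC (theta e j j) (fun _ => (1:ℂ))).comp (JC j)
        = 0 := by
      rw [ContinuousLinearMap.sub_comp, hPJ j j, horth j j, if_pos rfl, one_smul,
        ContinuousLinearMap.one_def, ContinuousLinearMap.id_comp, sub_self]
    have h1 := congrArg (fun A : Lp ℂ 2 μ →L[ℂ] Lp H 2 μ => A κ) h0
    simpa [ContinuousLinearMap.comp_apply] using h1
  have hQJi : ∀ κ : Lp ℂ 2 μ,
      ((1 : BH (Lp H 2 μ)) - oTC (theta e i i) (fun _ => (1:ℂ))) ((JC i) κ) = 0 := by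
    intro κ
    have h0 : ((1 : BH (Lp H 2 μ)) - oTC (theta e i i) (fun _ => (1:ℂ))).comp (JC i)
        = 0 := by
      rw [ContinuousLinearMap.sub_comp, hPJ i i, horth i i, if_pos rfl, one_smul,
        ContinuousLinearMap.one_def, ContinuousLinearMap.id_comp, sub_self]
    have h1 := congrArg (fun A : Lp ℂ 2 μ →L[ℂ] Lp H 2 μ => A κ) h0
    simpa [ContinuousLinearMap.comp_apply] using h1
  -- sandwich invariance for the three off-corner pieces
  have hyPQ1 : (oTC (theta e i i) (fun _ => (1:ℂ))).comp
      (((oTC (theta e i i) (fun _ => (1:ℂ))).comp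
        (x.comp ((1 : BH (Lp H 2 μ)) - oTC (theta e j j) (fun _ => (1:ℂ))))).comp
        ((1 : BH (Lp H 2 μ)) - oTC (theta e j j) (fun _ => (1:ℂ))))
      = (oTC (theta e i i) (fun _ => (1:ℂ))).comp
        (x.comp ((1 : BH (Lp H 2 μ)) - oTC (theta e j j) (fun _ => (1:ℂ)))) := by
    refine ContinuousLinearMap.ext fun ζ => ?_
    simp only [ContinuousLinearMap.comp_apply]
    rw [hQpt j, hPpt i]
  have hyPQ2 : ((1 : BH (Lp H 2 μ)) - oTC (theta e i i) (fun _ => (1:ℂ))).comp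
      ((((1 : BH (Lp H 2 μ)) - oTC (theta e i i) (fun _ => (1:ℂ))).comp
        (x.comp (oTC (theta e j j) (fun _ => (1:ℂ))))).comp
        (oTC (theta e j j) (fun _ => (1:ℂ))))
      = ((1 : BH (Lp H 2 μ)) - oTC (theta e i i) (fun _ => (1:ℂ))).comp
        (x.comp (oTC (theta e j j) (fun _ => (1:ℂ)))) := by
    refine ContinuousLinearMap.ext fun ζ => ?_
    simp only [ContinuousLinearMap.comp_apply]
    rw [hPpt j, hQpt i]
  have hyPQ3 : ((1 : BH (Lp H 2 μ)) - oTC (theta e i i) (fun _ => (1:ℂ))).comp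
      ((((1 : BH (Lp H 2 μ)) - oTC (theta e i i) (fun _ => (1:ℂ))).comp
        (x.comp ((1 : BH (Lp H 2 μ)) - oTC (theta e j j) (fun _ => (1:ℂ))))).comp
        ((1 : BH (Lp H 2 μ)) - oTC (theta e j j) (fun _ => (1:ℂ))))
      = ((1 : BH (Lp H 2 μ)) - oTC (theta e i i) (fun _ => (1:ℂ))).comp
        (x.comp ((1 : BH (Lp H 2 μ)) - oTC (theta e j j) (fun _ => (1:ℂ)))) := by
    refine ContinuousLinearMap.ext fun ζ => ?_
    simp only [ContinuousLinearMap.comp_apply]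
    rw [hQpt j, hQpt i]
  -- slices of the Ψ-images of the three pieces vanish
  have hz1 : (ContinuousLinearMap.adjoint (JC i)).comp
      ((Ψ ((oTC (theta e i i) (fun _ => (1:ℂ))).comp
        (x.comp ((1 : BH (Lp H 2 μ)) - oTC (theta e j j) (fun _ => (1:ℂ)))))).comp (JC j))
      = 0 := by
    refine ContinuousLinearMap.ext fun κ => ?_
    rw [ContinuousLinearMap.comp_apply, ContinuousLinearMap.comp_apply,
      ContinuousLinearMap.zero_apply]
    refine ext_inner_left ℂ fun v => ?_
    rw [inner_zero_right, ContinuousLinearMap.adjoint_inner_right, ← inner_conj_symm]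
    rw [psi_offdiag_zero hmulC hΨcp hΨlin.2 (hPadj i) (hPidem i) (hQadj j) (hQidem j)
      hyPQ1 hy1A (AC_star hmulC hy1A) hPciA hQcjA hΨPci hΨQcj (Or.inl (hQJj κ)), map_zero]
  have hz2 : (ContinuousLinearMap.adjoint (JC i)).comp
      ((Ψ (((1 : BH (Lp H 2 μ)) - oTC (theta e i i) (fun _ => (1:ℂ))).comp
        (x.comp (oTC (theta e j j) (fun _ => (1:ℂ)))))).comp (JC j))
      = 0 := by
    refine ContinuousLinearMap.ext fun κ => ?_
    rw [ContinuousLinearMap.comp_apply, ContinuousLinearMap.comp_apply,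
      ContinuousLinearMap.zero_apply]
    refine ext_inner_left ℂ fun v => ?_
    rw [inner_zero_right, ContinuousLinearMap.adjoint_inner_right, ← inner_conj_symm]
    rw [psi_offdiag_zero hmulC hΨcp hΨlin.2 (hQadj i) (hQidem i) (hPadj j) (hPidem j)
      hyPQ2 hy2A (AC_star hmulC hy2A) hQciA hPcjA hΨQci hΨPcj (Or.inr (hQJi v)), map_zero]
  have hz3 : (ContinuousLinearMap.adjoint (JC i)).comp
      ((Ψ (((1 : BH (Lp H 2 μ)) - oTC (theta e i i) (fun _ => (1:ℂ))).comp
        (x.comp ((1 : BH (Lp H 2 μ)) - oTC (theta e j j) (fun _ => (1:ℂ)))))).comp (JC j))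
      = 0 := by
    refine ContinuousLinearMap.ext fun κ => ?_
    rw [ContinuousLinearMap.comp_apply, ContinuousLinearMap.comp_apply,
      ContinuousLinearMap.zero_apply]
    refine ext_inner_left ℂ fun v => ?_
    rw [inner_zero_right, ContinuousLinearMap.adjoint_inner_right, ← inner_conj_symm]
    rw [psi_offdiag_zero hmulC hΨcp hΨlin.2 (hQadj i) (hQidem i) (hQadj j) (hQidem j)
      hyPQ3 hy3A (AC_star hmulC hy3A) hQciA hQcjA hΨQci hΨQcj (Or.inl (hQJj κ)), map_zero]
  -- assemble via linearity
  have hmem12 := AC_add hmulC ha1A hy1A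
  have hmem123 := AC_add hmulC hmem12 hy2A
  have hΨx : Ψ x
      = Ψ ((oTC (theta e i i) (fun _ => (1:ℂ))).comp
          (x.comp (oTC (theta e j j) (fun _ => (1:ℂ)))))
      + Ψ ((oTC (theta e i i) (fun _ => (1:ℂ))).comp
          (x.comp ((1 : BH (Lp H 2 μ)) - oTC (theta e j j) (fun _ => (1:ℂ)))))
      + Ψ (((1 : BH (Lp H 2 μ)) - oTC (theta e i i) (fun _ => (1:ℂ))).comp
          (x.comp (oTC (theta e j j) (fun _ => (1:ℂ)))))
      + Ψ (((1 : BH (Lp H 2 μ)) - oTC (theta e i i) (fun _ => (1:ℂ))).comp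
          (x.comp ((1 : BH (Lp H 2 μ)) - oTC (theta e j j) (fun _ => (1:ℂ))))) := by
    conv_lhs => rw [hdec]
    rw [hΨlin.1 _ hmem123 _ hy3A, hΨlin.1 _ hmem12 _ hy2A, hΨlin.1 _ ha1A _ hy1A]
  have hslice_add : ∀ (A B : BH (Lp H 2 μ)),
      (ContinuousLinearMap.adjoint (JC i)).comp ((A + B).comp (JC j))
        = (ContinuousLinearMap.adjoint (JC i)).comp (A.comp (JC j))
          + (ContinuousLinearMap.adjoint (JC i)).comp (B.comp (JC j)) := fun A B => by
    refine ContinuousLinearMap.ext fun ξ => ?_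
    simp [ContinuousLinearMap.comp_apply, ContinuousLinearMap.add_apply]
  rw [hΨx, hslice_add, hslice_add, hslice_add, hz1, hz2, hz3, add_zero, add_zero, add_zero,
    hΨa1, ha1eq, slice_oTC hJC hmulC hoTC _ hfij i j]
  have hval : (inner ℂ (e i) (theta e i j (e j)) : ℂ) = 1 := by
    rw [theta_apply, inner_smul_right, horth i i, horth j j]
    simp
  rw [hval, one_smul]
  exact hfijeq

end MainAux
end Statement2Aux
/-- Proposition 3.1.  Let `(X, F, μ)` be a complete measure space, `H` a
Hilbert space, and let `id ⊗̄ q : B(H) ⊗̄ M^∞(F) → B(H) ⊗̄ L^∞(X, μ)` be the unique unital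
completely positive map extending `id ⊙ q`.  If `ρ` is a lifting for `(X, F, μ)`, then the
unique unital completely positive map `id ⊗̄ ρ : B(H) ⊗̄ L^∞(X, μ) → B(H) ⊗̄ M^∞(F)` extending
`id ⊙ ρ` is a unital complete order embedding and satisfies `(id ⊗̄ q) ∘ (id ⊗̄ ρ) = id`. -/
theorem statement2
    {X : Type u} [MeasurableSpace X] (μ : MeasureTheory.Measure X) (hμ : μ.IsComplete)
    {H : Type u} [NormedAddCommGroup H] [InnerProductSpace ℂ H] [CompleteSpace H]
    {ι : Type u} (e : ι → H)
    -- `M^∞(F)` represented by multiplication operators on `ℓ²(X)`, and the isometries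
    -- realizing `B(H) ⊗̄ M^∞(F)` inside `B(ℓ²(X; H)) = B(H ⊗ ℓ²(X))`
    (JD : ι → (ld2 X ℂ →L[ℂ] ld2 X H)) (hJD : IsTensorIsometriesD e JD)
    (mulD : (X → ℂ) → BH (ld2 X ℂ)) (hmulD : IsMulRepD mulD)
    (oTD : BH H → (X → ℂ) → BH (ld2 X H)) (hoTD : IsElemTensorRepD oTD)
    -- `L^∞(X, μ)` represented by multiplication operators on `L²(X, μ)`, and the isometries
    -- realizing `B(H) ⊗̄ L^∞(X, μ)` inside `B(L²(X, μ; H)) = B(H ⊗ L²(X, μ))`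
    (JC : ι → (MeasureTheory.Lp ℂ 2 μ →L[ℂ] MeasureTheory.Lp H 2 μ))
    (hJC : IsTensorIsometriesL μ e JC)
    (mulC : (X → ℂ) → BH (MeasureTheory.Lp ℂ 2 μ)) (hmulC : IsMulRepL μ mulC)
    (oTC : BH H → (X → ℂ) → BH (MeasureTheory.Lp H 2 μ)) (hoTC : IsElemTensorRepL μ oTC)
    -- `Φq = id ⊗̄ q`: the unique UCP extension of `id ⊙ q`
    (Φq : BH (ld2 X H) → BH (MeasureTheory.Lp H 2 μ))
    (hΦqucp : IsUCPOn Φq (fubini JD (mulD '' MInfty X)))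
    (hΦqext : ∀ (T : BH H), ∀ f ∈ MInfty X, Φq (oTD T f) = oTC T f)
    (hΦqran : ∀ x ∈ fubini JD (mulD '' MInfty X), Φq x ∈ fubini JC (mulC '' MInfty X))
    -- `ρ`: a lifting for `(X, F, μ)`
    (ρL : (X → ℂ) → (X → ℂ)) (hρ : IsLifting μ ρL) :
    -- every unital completely positive map `Φρ` extending `id ⊙ ρ` (with range in
    -- `B(H) ⊗̄ M^∞(F)`) is a unital complete order embedding and is a right inverse of `Φq`
    ∀ Φρ : BH (MeasureTheory.Lp H 2 μ) → BH (ld2 X H),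
      IsUCPOn Φρ (fubini JC (mulC '' MInfty X)) →
      (∀ (T : BH H), ∀ f ∈ MInfty X, Φρ (oTC T f) = oTD T (ρL f)) →
      (∀ x ∈ fubini JC (mulC '' MInfty X), Φρ x ∈ fubini JD (mulD '' MInfty X)) →
      (Φρ 1 = 1 ∧ IsCompleteOrderEmbeddingOn Φρ (fubini JC (mulC '' MInfty X)) ∧
        ∀ x ∈ fubini JC (mulC '' MInfty X), Φq (Φρ x) = x) := by
  intro Φρ hρucp hρext hρran
  obtain ⟨hρlin, hρcp, hρone⟩ := hρucp
  obtain ⟨hqlin, hqcp, hqone⟩ := hΦqucp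
  classical
  have hΨlin : IsLinearOn (fun z => Φq (Φρ z)) (fubini JC (mulC '' MInfty X)) := by
    constructor
    · intro a ha b hb
      show Φq (Φρ (a + b)) = Φq (Φρ a) + Φq (Φρ b)
      rw [hρlin.1 a ha b hb, hqlin.1 _ (hρran a ha) _ (hρran b hb)]
    · intro c a ha
      show Φq (Φρ (c • a)) = c • Φq (Φρ a)
      rw [hρlin.2 c a ha, hqlin.2 c _ (hρran a ha)]
  have hΨcp : IsCompletelyPositiveOn (fun z => Φq (Φρ z)) (fubini JC (mulC '' MInfty X)) := by
    intro n M hM hpos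
    have h1 := hρcp n M hM hpos
    have h2 := hqcp n (M.map Φρ) (fun a b => hρran _ (hM a b)) h1
    rwa [Matrix.map_map] at h2
  have hΨfix : ∀ (T : BH H), ∀ f ∈ MInfty X, Φq (Φρ (oTC T f)) = oTC T f := by
    intro T f hf
    rw [hρext T f hf, hΦqext T (ρL f) (hρ.1 f hf).1]
    exact oTC_congr hoTC T (hρ.1 f hf).1 hf (hρ.1 f hf).2
  have key : ∀ x ∈ fubini JC (mulC '' MInfty X), Φq (Φρ x) = x := by
    intro x hx
    have hsl : ∀ i j, (ContinuousLinearMap.adjoint (JC i)).comp ((Φq (Φρ x)).comp (JC j))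
        = (ContinuousLinearMap.adjoint (JC i)).comp (x.comp (JC j)) :=
      fun i j => psi_slice hJC hmulC hoTC hΨlin hΨcp hΨfix hx i j
    have hzero : ∀ i j, (ContinuousLinearMap.adjoint (JC i)).comp
        ((Φq (Φρ x) - x).comp (JC j)) = 0 := by
      intro i j
      have hdist : (ContinuousLinearMap.adjoint (JC i)).comp ((Φq (Φρ x) - x).comp (JC j))
          = (ContinuousLinearMap.adjoint (JC i)).comp ((Φq (Φρ x)).comp (JC j))
            - (ContinuousLinearMap.adjoint (JC i)).comp (x.comp (JC j)) := by
        refine ContinuousLinearMap.ext fun ξ => ?_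
        simp [ContinuousLinearMap.comp_apply, ContinuousLinearMap.sub_apply, map_sub]
      rw [hdist, hsl i j, sub_self]
    exact sub_eq_zero.mp (zero_of_slices hJC hzero)
  refine ⟨hρone, ?_, key⟩
  intro n M hM
  constructor
  · intro hpos
    have h1 : entriesIn (M.map Φρ) (fubini JD (mulD '' MInfty X)) :=
      fun a b => hρran _ (hM a b)
    have h2 := hqcp n (M.map Φρ) h1 hpos
    rw [Matrix.map_map] at h2
    have hMM : M.map (Φq ∘ Φρ) = M := by
      funext a b
      exact key _ (hM a b)
    rwa [hMM] at h2
  · exact fun hpos => hρcp n M hM hpos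

end Paper
end
end

section
/- Let $(\mathcal{A}, G, \alpha)$ be a dynamical system and let $(\pi, \mu)$ be a covariant pair for $(\mathcal{A}, G, \alpha)$ on a Hilbert space $\mathcal{H}$. Then $\pi$ is $\alpha$-admissible: the formula $\widehat{\alpha}_g(T) = \mu_g T \mu_g^*$ for $T \in C^*(\pi(\mathcal{A}))$ defines a point-norm continuous action $\widehat{\alpha} : G \curvearrowright C^*(\pi(\mathcal{A}))$ by $*$-automorphisms satisfying $\widehat{\alpha}_g \circ \pi = \pi \circ \alpha_g$ for all $g \in G$. -/
set_option linter.unusedVariables false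

universe u

noncomputable section

open MeasureTheory Filter Topology Set

namespace Paper

section Stmt5Aux

set_option linter.unusedSectionVars false

variable {H : Type*} [NormedAddCommGroup H] [InnerProductSpace ℂ H] [CompleteSpace H]

lemma matOp_apply_aux {n : ℕ} (M : Matrix (Fin n) (Fin n) (BH H))
    (ξ : PiLp 2 fun _ : Fin n => H) (i : Fin n) : matOp M ξ i = ∑ j, M i j (ξ j) := by
  simp [matOp]

lemma pilp_one_norm_aux (ξ : PiLp 2 fun _ : Fin 1 => H) : ‖ξ‖ = ‖ξ 0‖ := by
  rw [PiLp.norm_eq_sum (by norm_num : (0:ℝ) < (2:ENNReal).toReal)]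
  simp
  rw [← Real.rpow_natCast (‖ξ 0‖) 2, ← Real.rpow_mul (norm_nonneg _)]
  norm_num

lemma matOp_one_norm_aux (M : Matrix (Fin 1) (Fin 1) (BH H)) : ‖matOp M‖ = ‖M 0 0‖ := by
  have happ : ∀ ξ : PiLp 2 fun _ : Fin 1 => H, matOp M ξ 0 = M 0 0 (ξ 0) := by
    intro ξ; rw [matOp_apply_aux]; simp [Fin.sum_univ_one]
  apply le_antisymm
  · apply ContinuousLinearMap.opNorm_le_bound _ (norm_nonneg _)
    intro ξ
    rw [pilp_one_norm_aux, pilp_one_norm_aux, happ]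
    exact (M 0 0).le_opNorm (ξ 0)
  · apply ContinuousLinearMap.opNorm_le_bound _ (norm_nonneg _)
    intro x
    set ξ : PiLp 2 fun _ : Fin 1 => H :=
      (PiLp.continuousLinearEquiv 2 ℂ (fun _ : Fin 1 => H)).symm fun _ => x with hξ
    have h0 : ξ 0 = x := rfl
    calc ‖M 0 0 x‖ = ‖matOp M ξ‖ := by rw [pilp_one_norm_aux, happ, h0]
      _ ≤ ‖matOp M‖ * ‖ξ‖ := (matOp M).le_opNorm ξ
      _ = ‖matOp M‖ * ‖x‖ := by rw [pilp_one_norm_aux, h0]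

end Stmt5Aux

/-- If `(A, G, α)` is a dynamical system and `(π, u)` is a covariant pair for
`(A, G, α)` on `K`, then `π` is `α`-admissible: `α̂_g(T) = u_g T u_g*` defines a point-norm
continuous action of `G` on `C*(π(A))` by ∗-automorphisms satisfying `α̂_g ∘ π = π ∘ α_g`. -/
theorem statement5 {H K G : Type u}
    [NormedAddCommGroup H] [InnerProductSpace ℂ H] [CompleteSpace H]
    [NormedAddCommGroup K] [InnerProductSpace ℂ K] [CompleteSpace K]
    [Group G] [TopologicalSpace G] [IsTopologicalGroup G] [LocallyCompactSpace G] [T2Space G]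
    (A : Set (BH H)) (act : G → BH H → BH H)
    (hAI : HasContractiveAI A)
    (hdyn : IsDynamicalSystem G A act)
    (π : BH H → BH K) (u : G → BH K)
    (hπhom : IsHomOn π A) (hπcc : IsCompletelyContractiveOn π A)
    (hπnd : IsNondegenerateOn π A)
    (hu_unitary : ∀ g, u g * star (u g) = 1 ∧ star (u g) * u g = 1)
    (hu_one : u 1 = 1)
    (hu_mul : ∀ g h, u (g * h) = u g * u h)
    (hu_cont : ∀ ξ : K, Continuous fun g => u g ξ)
    (hcov : ∀ g, ∀ a ∈ A, π (act g a) = u g * π a * star (u g)) :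
    IsCStarDynamicalSystem G (genCStar (π '' A)) (fun g T => u g * T * star (u g)) ∧
      ∀ g, ∀ a ∈ A, u g * π a * star (u g) = π (act g a) := by
  obtain ⟨hopalg, hmaps, hhomA, honeA, hmulA, hciA, hcontA⟩ := hdyn
  have hsubA : IsSubalgebra A := hopalg.1
  -- norm of the unitaries
  have hu_norm : ∀ g : G, ‖u g‖ ≤ 1 := by
    intro g
    have h : ‖star (u g) * u g‖ = ‖u g‖ * ‖u g‖ := CStarRing.norm_star_mul_self
    rw [(hu_unitary g).2] at h
    have h1 : ‖(1 : BH K)‖ ≤ 1 := by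
      rw [ContinuousLinearMap.one_def]; exact ContinuousLinearMap.norm_id_le
    nlinarith [norm_nonneg (u g)]
  have hφnorm : ∀ (g : G) (T : BH K), ‖u g * T * star (u g)‖ ≤ ‖T‖ := by
    intro g T
    have h1 : ‖u g * T * star (u g)‖ ≤ ‖u g * T‖ * ‖star (u g)‖ := norm_mul_le _ _
    have h2 : ‖u g * T‖ ≤ ‖u g‖ * ‖T‖ := norm_mul_le _ _
    have h3 : ‖star (u g)‖ = ‖u g‖ := norm_star _
    nlinarith [norm_nonneg (u g), norm_nonneg T, norm_nonneg (u g * T), hu_norm g,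
      norm_nonneg (star (u g))]
  -- algebraic identities for conjugation
  have hφmul : ∀ (g : G) (x y : BH K),
      u g * (x * y) * star (u g) = (u g * x * star (u g)) * (u g * y * star (u g)) := by
    intro g x y
    have h := (hu_unitary g).2
    simp only [mul_assoc]
    rw [← mul_assoc (star (u g)) (u g), h, one_mul]
  have hφstar : ∀ (g : G) (x : BH K),
      u g * star x * star (u g) = star (u g * x * star (u g)) := by
    intro g x
    simp only [star_mul, star_star, mul_assoc]
  -- π is contractive on A
  have hπ_norm : ∀ z ∈ A, ‖π z‖ ≤ ‖z‖ := by
    intro z hz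
    have h := hπcc 1 (Matrix.of fun _ _ => z) (fun _ _ => hz)
    rw [matOp_one_norm_aux, matOp_one_norm_aux] at h
    simpa [Matrix.map_apply, Matrix.of_apply] using h
  have hsubm : ∀ x ∈ A, ∀ y ∈ A, x - y ∈ A := by
    intro x hx y hy
    have h := hsubA.1 x hx ((-1 : ℂ) • y) (hsubA.2.1 (-1) y hy)
    rwa [neg_one_smul, ← sub_eq_add_neg] at h
  have hπsub : ∀ x ∈ A, ∀ y ∈ A, π (x - y) = π x - π y := by
    intro x hx y hy
    have hxy : x - y = x + (-1 : ℂ) • y := by rw [neg_one_smul, ← sub_eq_add_neg]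
    rw [hxy, hπhom.1.1 x hx ((-1 : ℂ) • y) (hsubA.2.1 (-1) y hy), hπhom.1.2 (-1) y hy,
      neg_one_smul, ← sub_eq_add_neg]
  have hπlip : ∀ x ∈ A, ∀ y ∈ A, ‖π x - π y‖ ≤ ‖x - y‖ := by
    intro x hx y hy
    rw [← hπsub x hx y hy]
    exact hπ_norm _ (hsubm x hx y hy)
  -- continuity of g ↦ π (act g a)
  have hcontπa : ∀ a ∈ A, Continuous fun g => π (act g a) := by
    intro a ha
    have hlip : LipschitzWith 1 fun x : A => π x := by
      apply LipschitzWith.of_dist_le_mul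
      intro x y
      rw [NNReal.coe_one, one_mul, dist_eq_norm, Subtype.dist_eq, dist_eq_norm]
      exact hπlip x x.2 y y.2
    have hc2 : Continuous fun g => (⟨act g a, hmaps g ha⟩ : A) :=
      Continuous.subtype_mk (hcontA a ha) _
    exact hlip.continuous.comp hc2
  -- the set of operators with norm-continuous orbit maps
  set S : Set (BH K) := {T | Continuous fun g => u g * T * star (u g)} with hSdef
  have hS_closed : IsClosed S := by
    refine isClosed_of_closure_subset ?_
    intro T hT
    obtain ⟨Ts, hTs, hTlim⟩ := mem_closure_iff_seq_limit.mp hT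
    show Continuous fun g => u g * T * star (u g)
    have huni : TendstoUniformly (fun n g => u g * Ts n * star (u g))
        (fun g => u g * T * star (u g)) atTop := by
      rw [Metric.tendstoUniformly_iff]
      intro ε hε
      filter_upwards [Metric.tendsto_nhds.mp hTlim ε hε] with n hn g
      rw [dist_eq_norm]
      have heq : u g * T * star (u g) - u g * Ts n * star (u g)
          = u g * (T - Ts n) * star (u g) := by rw [mul_sub, sub_mul]
      rw [heq]
      calc ‖u g * (T - Ts n) * star (u g)‖ ≤ ‖T - Ts n‖ := hφnorm g _
        _ = dist (Ts n) T := by rw [dist_eq_norm, norm_sub_rev]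
        _ < ε := hn
    exact huni.continuous (Filter.Eventually.of_forall fun n => hTs n).frequently
  have hS_cstar : IsCStarSubalgebra S ∧ π '' A ⊆ S := by
    refine ⟨⟨⟨⟨?_, ?_, ?_⟩, hS_closed⟩, ?_⟩, ?_⟩
    · intro x hx y hy
      have heq : (fun g => u g * (x + y) * star (u g))
          = fun g => (u g * x * star (u g)) + (u g * y * star (u g)) := by
        funext g; rw [mul_add, add_mul]
      show Continuous fun g => u g * (x + y) * star (u g)
      rw [heq]; exact hx.add hy
    · intro c x hx
      have heq : (fun g => u g * (c • x) * star (u g))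
          = fun g => c • (u g * x * star (u g)) := by
        funext g; rw [mul_smul_comm, smul_mul_assoc]
      show Continuous fun g => u g * (c • x) * star (u g)
      rw [heq]; exact hx.const_smul c
    · intro x hx y hy
      have heq : (fun g => u g * (x * y) * star (u g))
          = fun g => (u g * x * star (u g)) * (u g * y * star (u g)) := by
        funext g; exact hφmul g x y
      show Continuous fun g => u g * (x * y) * star (u g)
      rw [heq]; exact hx.mul hy
    · intro x hx
      have heq : (fun g => u g * star x * star (u g))
          = fun g => star (u g * x * star (u g)) := by
        funext g; exact hφstar g x
      show Continuous fun g => u g * star x * star (u g)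
      rw [heq]; exact hx.star
    · rintro _ ⟨a, ha, rfl⟩
      show Continuous fun g => u g * π a * star (u g)
      have heq : (fun g => u g * π a * star (u g)) = fun g => π (act g a) :=
        funext fun g => (hcov g a ha).symm
      rw [heq]; exact hcontπa a ha
  -- the generated C*-algebra is a C*-subalgebra
  have hB_cstar : IsCStarSubalgebra (genCStar (π '' A)) := by
    refine ⟨⟨⟨?_, ?_, ?_⟩, ?_⟩, ?_⟩
    · intro x hx y hy
      simp only [genCStar, Set.mem_sInter] at *
      intro C hC
      exact hC.1.1.1.1 x (hx C hC) y (hy C hC)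
    · intro c x hx
      simp only [genCStar, Set.mem_sInter] at *
      intro C hC
      exact hC.1.1.1.2.1 c x (hx C hC)
    · intro x hx y hy
      simp only [genCStar, Set.mem_sInter] at *
      intro C hC
      exact hC.1.1.1.2.2 x (hx C hC) y (hy C hC)
    · exact isClosed_sInter fun C hC => hC.1.1.2
    · intro x hx
      simp only [genCStar, Set.mem_sInter] at *
      intro C hC
      exact hC.1.2 x (hx C hC)
  -- conjugation maps the generated C*-algebra to itself
  have hMapsB : ∀ g : G, Set.MapsTo (fun T => u g * T * star (u g))
      (genCStar (π '' A)) (genCStar (π '' A)) := by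
    intro g T hT
    show u g * T * star (u g) ∈ genCStar (π '' A)
    simp only [genCStar, Set.mem_sInter] at hT ⊢
    intro C hC
    have hφcont : Continuous fun T : BH K => u g * T * star (u g) :=
      (continuous_const.mul continuous_id).mul continuous_const
    have hD : IsCStarSubalgebra {T : BH K | u g * T * star (u g) ∈ C}
        ∧ π '' A ⊆ {T : BH K | u g * T * star (u g) ∈ C} := by
      refine ⟨⟨⟨⟨?_, ?_, ?_⟩, ?_⟩, ?_⟩, ?_⟩
      · intro x hx y hy
        show u g * (x + y) * star (u g) ∈ C
        rw [mul_add, add_mul]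
        exact hC.1.1.1.1 _ hx _ hy
      · intro c x hx
        show u g * (c • x) * star (u g) ∈ C
        rw [mul_smul_comm, smul_mul_assoc]
        exact hC.1.1.1.2.1 c _ hx
      · intro x hx y hy
        show u g * (x * y) * star (u g) ∈ C
        rw [hφmul g x y]
        exact hC.1.1.1.2.2 _ hx _ hy
      · exact hC.1.1.2.preimage hφcont
      · intro x hx
        show u g * star x * star (u g) ∈ C
        rw [hφstar g x]
        exact hC.1.2 _ hx
      · rintro _ ⟨a, ha, rfl⟩
        show u g * π a * star (u g) ∈ C
        rw [← hcov g a ha]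
        exact hC.2 ⟨act g a, hmaps g ha, rfl⟩
    exact hT _ hD
  refine ⟨⟨hB_cstar, hMapsB, ?_, ?_, ?_, ?_⟩, fun g a ha => (hcov g a ha).symm⟩
  · -- ∗-homomorphism on B
    intro g
    refine ⟨⟨⟨fun x _ y _ => ?_, fun c x _ => ?_⟩, fun x _ y _ => hφmul g x y⟩,
      fun x _ => hφstar g x⟩
    · show u g * (x + y) * star (u g)
        = u g * x * star (u g) + u g * y * star (u g)
      rw [mul_add, add_mul]
    · show u g * (c • x) * star (u g) = c • (u g * x * star (u g))
      rw [mul_smul_comm, smul_mul_assoc]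
  · -- identity acts trivially
    intro b _
    show u 1 * b * star (u 1) = b
    rw [hu_one, star_one, one_mul, mul_one]
  · -- action property
    intro g h b _
    show u (g * h) * b * star (u (g * h)) = u g * (u h * b * star (u h)) * star (u g)
    rw [hu_mul, star_mul]
    simp only [mul_assoc]
  · -- point-norm continuity
    intro b hb
    simp only [genCStar, Set.mem_sInter] at hb
    exact hb S hS_cstar


end Paper
end
end
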